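/- arXiv:2209.06658 — 4 statements merged into one kernel-verified Lean document; each statement's English description precedes it below -/
import Mathlib

section
/- Let q be a power of an odd prime, Tr the trace from F_{q^n} to F_q, and for c ∈ F_{q^n}* define the quadratic form Q_c : F_{q^n} → F_q by Q_c(x) = Tr(c·x·Tr(x)). Then the radical of Q_c (with respect to the associated symmetric bilinear form B_c(x,y) = Tr(y·(Tr(cx) + c·Tr(x)))) has F_q-dimension n−1 if c ∈ F_q*, and dimension n−2 if c ∈ F_{q^n} \ F_q. -/
/-- The symmetric bilinear form associated to the quadratic form
`Q_c(x) = Tr(c·x·Tr(x))`, namely `B_c(x,y) = Tr(y·(Tr(cx) + c·Tr(x)))`. -/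
noncomputable def bilinB (Fq Fqn : Type) [Field Fq] [Field Fqn] [Fintype Fq] [Fintype Fqn]
    [Algebra Fq Fqn] (c x y : Fqn) : Fq :=
  Algebra.trace Fq Fqn
    (y * (algebraMap Fq Fqn (Algebra.trace Fq Fqn (c * x)) +
      c * algebraMap Fq Fqn (Algebra.trace Fq Fqn x)))

theorem radical_dim (p s n : ℕ) [Fact p.Prime] (hp : Odd p) (hs : 0 < s) (hn : 0 < n)
    (q : ℕ) (hq : q = p ^ s)
    (Fq Fqn : Type) [Field Fq] [Field Fqn] [Fintype Fq] [Fintype Fqn] [Algebra Fq Fqn]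
    (hcard : Fintype.card Fq = q) (hcardn : Fintype.card Fqn = q ^ n)
    (c : Fqn) (hc : c ≠ 0)
    (W : Submodule Fq Fqn)
    (hW : ∀ x : Fqn, x ∈ W ↔ ∀ y : Fqn, bilinB Fq Fqn c x y = 0) :
    (c ∈ Set.range (algebraMap Fq Fqn) → Module.finrank Fq W = n - 1) ∧
    (c ∉ Set.range (algebraMap Fq Fqn) → Module.finrank Fq W = n - 2) := by
  have hFD : FiniteDimensional Fq Fqn := inferInstance
  set T : Fqn →ₗ[Fq] Fq := Algebra.trace Fq Fqn with hT
  have hq2 : 2 ≤ q := by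
    rw [hq]
    calc 2 ≤ p := (Fact.out : p.Prime).two_le
    _ ≤ p ^ s := Nat.le_self_pow hs.ne' p
  have hdim : Module.finrank Fq Fqn = n := by
    have := Module.card_eq_pow_finrank (K := Fq) (V := Fqn)
    rw [hcard, hcardn] at this
    exact (Nat.pow_right_injective hq2 this.symm)
  have hinj : Function.Injective (algebraMap Fq Fqn) := (algebraMap Fq Fqn).injective
  -- 2 ≠ 0 in Fq
  have hp' : (ringChar Fq).Prime := CharP.char_is_prime Fq (ringChar Fq)
  obtain ⟨m, _, hm⟩ := FiniteField.card Fq (ringChar Fq)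
  rw [hcard, hq] at hm
  have h2 : (2 : Fq) ≠ 0 := by
    intro h20
    have hd : ringChar Fq ∣ 2 :=
      (CharP.cast_eq_zero_iff Fq (ringChar Fq) 2).mp (by exact_mod_cast h20)
    have h2' : ringChar Fq = 2 := (Nat.prime_dvd_prime_iff_eq hp' Nat.prime_two).mp hd
    rw [h2'] at hm
    have : p ∣ 2 ^ (m : ℕ) := hm ▸ dvd_pow_self p hs.ne'
    have : p = 2 := (Nat.prime_dvd_prime_iff_eq Fact.out Nat.prime_two).mp
      ((Fact.out : p.Prime).dvd_of_dvd_pow this)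
    have := Nat.odd_iff.mp hp
    omega
  -- nondegeneracy of the trace form
  have nd : (Algebra.traceForm Fq Fqn).Nondegenerate := traceForm_nondegenerate Fq Fqn
  -- membership in W
  have hmem : ∀ x : Fqn, x ∈ W ↔
      algebraMap Fq Fqn (T (c * x)) + c * algebraMap Fq Fqn (T x) = 0 := by
    intro x
    rw [hW x]
    constructor
    · intro h
      refine nd.1 _ (fun y => ?_)
      rw [Algebra.traceForm_apply, mul_comm]
      exact h y
    · intro h y
      unfold bilinB
      rw [show (algebraMap Fq Fqn (Algebra.trace Fq Fqn (c * x)) +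
          c * algebraMap Fq Fqn (Algebra.trace Fq Fqn x)) = 0 from h, mul_zero, map_zero]
  -- trace is surjective
  have hTne : T ≠ 0 := Algebra.trace_ne_zero Fq Fqn
  obtain ⟨x₀, hx₀⟩ : ∃ x, T x ≠ 0 := by
    by_contra h
    push_neg at h
    exact hTne (LinearMap.ext fun x => h x)
  have hTsurj : Function.Surjective T := by
    intro a
    exact ⟨(a / T x₀) • x₀, by rw [map_smul, smul_eq_mul, div_mul_cancel₀ a hx₀]⟩
  constructor
  · -- c ∈ Fq
    rintro ⟨c₀, rfl⟩
    have hc₀ : c₀ ≠ 0 := fun h => hc (by rw [h, map_zero])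
    have hWk : W = LinearMap.ker T := by
      ext x
      rw [hmem x, LinearMap.mem_ker]
      have hcx : T (algebraMap Fq Fqn c₀ * x) = c₀ * T x := by
        rw [← Algebra.smul_def, map_smul, smul_eq_mul]
      constructor
      · intro h
        have h' : algebraMap Fq Fqn (c₀ * T x) + algebraMap Fq Fqn (c₀ * T x) = 0 := by
          rw [← h, hcx, map_mul]
        rw [← map_add, ← two_mul] at h'
        have h0 : 2 * (c₀ * T x) = 0 := hinj (by rw [h', map_zero])
        rcases mul_eq_zero.mp h0 with h | h
        · exact absurd h h2
        · exact (mul_eq_zero.mp h).resolve_left hc₀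
      · intro h
        simp [hcx, h]
    rw [hWk]
    have hr := LinearMap.finrank_range_add_finrank_ker T
    rw [LinearMap.range_eq_top.mpr hTsurj, finrank_top, Module.finrank_self, hdim] at hr
    omega
  · -- c ∉ Fq
    intro hcr
    set S : Fqn →ₗ[Fq] Fq := T ∘ₗ LinearMap.mulLeft Fq c with hS
    have hSapp : ∀ x, S x = T (c * x) := fun x => rfl
    set L : Fqn →ₗ[Fq] Fq × Fq := T.prod S with hL
    have hWk : W = LinearMap.ker L := by
      ext x
      rw [hmem x, LinearMap.mem_ker]
      constructor
      · intro h
        have hTx : T x = 0 := by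
          by_contra hTx
          apply hcr
          refine ⟨-(T (c * x)) / T x, ?_⟩
          have hTx' : algebraMap Fq Fqn (T x) ≠ 0 :=
            fun h0 => hTx ((map_eq_zero _).mp h0)
          rw [map_div₀, map_neg, div_eq_iff hTx']
          linear_combination -h
        have hTcx : T (c * x) = 0 := by
          apply hinj
          rw [map_zero]
          have := h
          rw [hTx, map_zero, mul_zero, add_zero] at this
          exact this
        exact Prod.ext (by simpa [hL] using hTx) (by simpa [hL, hSapp] using hTcx)
      · intro h
        have h1 : T x = 0 := congrArg Prod.fst h
        have h2' : T (c * x) = 0 := by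
          have := congrArg Prod.snd h
          simpa [hL, hSapp] using this
        simp [h1, h2']
    -- L is surjective
    obtain ⟨x₁, hx₁⟩ := hTsurj 1
    have hLsurj : Function.Surjective L := by
      by_cases hker : ∀ x, T x = 0 → T (c * x) = 0
      · -- then c ∈ Fq, contradiction
        exfalso
        apply hcr
        set lam := T (c * x₁) with hlam
        have key : ∀ x, T (c * x) = T x * lam := by
          intro x
          have hk : T (x - T x • x₁) = 0 := by
            rw [map_sub, map_smul, smul_eq_mul, hx₁, mul_one, sub_self]
          have := hker _ hk
          rw [mul_sub, map_sub, mul_smul_comm, map_smul, smul_eq_mul, sub_eq_zero] at this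
          rw [this, hlam, mul_comm]
        refine ⟨lam, ?_⟩
        have : c - algebraMap Fq Fqn lam = 0 := by
          refine nd.1 _ (fun y => ?_)
          rw [Algebra.traceForm_apply, sub_mul, map_sub, key y,
            ← Algebra.smul_def, map_smul, smul_eq_mul, mul_comm (T y) lam, mul_comm lam (T y),
            sub_self]
        rw [sub_eq_zero] at this
        exact this.symm
      · push_neg at hker
        obtain ⟨x₂, hx₂T, hx₂S⟩ := hker
        rintro ⟨a, b⟩
        refine ⟨a • x₁ + ((b - a * T (c * x₁)) / T (c * x₂)) • x₂, ?_⟩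
        have hT1 : T (a • x₁ + ((b - a * T (c * x₁)) / T (c * x₂)) • x₂) = a := by
          rw [map_add, map_smul, map_smul, hx₁, hx₂T, smul_eq_mul, smul_eq_mul,
            mul_one, mul_zero, add_zero]
        have hS1 : S (a • x₁ + ((b - a * T (c * x₁)) / T (c * x₂)) • x₂) = b := by
          rw [map_add, map_smul, map_smul, smul_eq_mul, smul_eq_mul, hSapp, hSapp,
            div_mul_cancel₀ _ hx₂S]
          ring
        exact Prod.ext (by simpa [hL] using hT1) (by simpa [hL] using hS1)
    rw [hWk]
    have hr := LinearMap.finrank_range_add_finrank_ker L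
    rw [LinearMap.range_eq_top.mpr hLsurj, finrank_top, Module.finrank_prod,
      Module.finrank_self, hdim] at hr
    omega
end

section
/- Let q be a power of an odd prime, d a divisor of q^n − 1, a ∈ F_{q^n}*, b ∈ F_{q^n}, and χ_d a multiplicative character of F_{q^n}* of order d with Gauss sums G_n(χ) = Σ_{x∈F_{q^n}*} χ(x)ψ(x). Then the number of F_{q^n}-points on y^d = a·x·Tr(x) + b equals q^n + (1/q^n) Σ_{ℓ=1}^{d−1} G_n(χ_d^ℓ) Σ_{c ∈ F_{q^n}*} ψ(cb)·(conj χ_d)^ℓ(−c)·Σ_{x ∈ F_{q^n}} ψ(c·a·x·Tr(x)). -/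
/-- The canonical additive character `ψ(x) = exp(2πi·Tr_{F/F_p}(x)/p)`. -/
noncomputable def psiC (p : ℕ) [Fact p.Prime] (F : Type) [Field F] [Fintype F] [CharP F p]
    (x : F) : ℂ :=
  letI : Algebra (ZMod p) F := ZMod.algebra F p
  Complex.exp (2 * Real.pi * Complex.I * ((Algebra.trace (ZMod p) F x).val : ℂ) / p)

/-- The Gauss sum `G(χ) = Σ_{x} χ(x)·ψ(x)` (recall `χ(0)=0`). -/
noncomputable def gaussSum' (p : ℕ) [Fact p.Prime] (F : Type) [Field F] [Fintype F] [CharP F p]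
    (χ : MulChar F ℂ) : ℂ :=
  ∑ x : F, χ x * psiC p F x

/-- The number of `F_{q^n}`-rational points on the affine curve `y^d = a·x·Tr(x) + b`. -/
noncomputable def curveCard (Fq Fqn : Type) [Field Fq] [Field Fqn] [Fintype Fq] [Fintype Fqn]
    [Algebra Fq Fqn] (d : ℕ) (a b : Fqn) : ℕ :=
  Nat.card {xy : Fqn × Fqn //
    xy.2 ^ d = a * xy.1 * algebraMap Fq Fqn (Algebra.trace Fq Fqn xy.1) + b}

open Finset Polynomial in
/-- Root counting: the number of solutions of `y^d = u` in terms of characters. -/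
lemma rootCount_eq {F : Type} [Field F] [Fintype F] [DecidableEq F] (d : ℕ)
    (hd : d ∣ Fintype.card F - 1) (χ : MulChar F ℂ) (hχ : orderOf χ = d) (u : F) :
    (((Finset.univ.filter fun y : F => y ^ d = u).card : ℂ)) =
      (if u = 0 then 1 else 0) + ∑ ℓ ∈ Finset.range d, (χ ^ ℓ) u := by
  have hcard1 : 1 < Fintype.card F := Fintype.one_lt_card
  have hd0 : 0 < d := Nat.pos_of_dvd_of_pos hd (by omega)
  have hχd : χ ^ d = 1 := hχ ▸ pow_orderOf_eq_one χ
  obtain ⟨g, hg⟩ := IsCyclic.exists_generator (α := Fˣ)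
  have horderg : orderOf g = Fintype.card F - 1 := by
    rw [orderOf_eq_card_of_forall_mem_zpowers hg, Nat.card_eq_fintype_card, Fintype.card_units]
  have key : ∀ m : ℕ, (χ (g : F)) ^ m = 1 ↔ χ ^ m = 1 := by
    intro m
    constructor
    · intro hm
      rw [MulChar.eq_one_iff]
      intro a
      obtain ⟨k, hk⟩ := mem_powers_iff_mem_zpowers.mpr (hg a)
      replace hk : g ^ k = a := hk
      rw [← hk, MulChar.pow_apply_coe, Units.val_pow_eq_pow_val, map_pow, ← pow_mul,
        mul_comm, pow_mul, hm, one_pow]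
    · intro hm
      have := congrArg (fun ξ : MulChar F ℂ => ξ (g : F)) hm
      simpa [MulChar.pow_apply_coe, MulChar.one_apply_coe] using this
  have horder : orderOf (χ (g : F)) = d := by
    rw [← hχ]; exact orderOf_eq_orderOf_iff.mpr key
  rcases eq_or_ne u 0 with rfl | hu
  · have hfil : (Finset.univ.filter fun y : F => y ^ d = (0 : F)) = {0} := by
      ext y
      simp [pow_eq_zero_iff hd0.ne']
    rw [if_pos rfl, hfil, Finset.card_singleton]
    rw [Finset.sum_eq_zero (fun ℓ _ => MulChar.map_zero (χ ^ ℓ))]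
    norm_num
  · have hu' : IsUnit u := isUnit_iff_ne_zero.mpr hu
    obtain ⟨k, hk⟩ := mem_powers_iff_mem_zpowers.mpr (hg hu'.unit)
    replace hk : g ^ k = hu'.unit := hk
    have hiff : χ u = 1 ↔ ∃ v : F, v ^ d = u := by
      constructor
      · intro h1
        have hk1 : (χ (g : F)) ^ k = 1 := by
          rw [← map_pow, ← Units.val_pow_eq_pow_val, hk, IsUnit.unit_spec, h1]
        have hdk : d ∣ k := horder ▸ orderOf_dvd_of_pow_eq_one hk1
        obtain ⟨m, rfl⟩ := hdk
        replace hk : g ^ (d * m) = hu'.unit := hk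
        refine ⟨((g ^ m : Fˣ) : F), ?_⟩
        rw [← Units.val_pow_eq_pow_val, ← pow_mul, mul_comm m d, hk, IsUnit.unit_spec]
      · rintro ⟨v, rfl⟩
        have hv : v ≠ 0 := fun h => hu (by rw [h, zero_pow hd0.ne'])
        rw [map_pow, ← MulChar.pow_apply' χ hd0.ne', hχd,
          MulChar.one_apply (isUnit_iff_ne_zero.mpr hv)]
    rw [if_neg hu]
    by_cases hP : ∃ v : F, v ^ d = u
    · obtain ⟨v, hv⟩ := hP
      have hgprim : IsPrimitiveRoot ((g : Fˣ) : F) (Fintype.card F - 1) := by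
        rw [IsPrimitiveRoot.coe_units_iff]
        exact horderg ▸ IsPrimitiveRoot.orderOf g
      obtain ⟨e, he⟩ := hd
      have hζ : IsPrimitiveRoot (((g : Fˣ) : F) ^ e) d :=
        IsPrimitiveRoot.pow (n := Fintype.card F - 1) (by omega) hgprim (by rw [he, mul_comm])
      have hfil : (Finset.univ.filter fun y : F => y ^ d = u) = (nthRoots d u).toFinset := by
        ext y
        simp [mem_nthRoots hd0]
      rw [hfil, Multiset.toFinset_card_of_nodup (hζ.nthRoots_nodup hu),
        hζ.card_nthRoots u, if_pos ⟨v, hv⟩]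
      have hu1 : χ u = 1 := hiff.mpr ⟨v, hv⟩
      have hterm : ∀ ℓ ∈ Finset.range d, (χ ^ ℓ) u = 1 := by
        intro ℓ _
        rw [← hu'.unit_spec, MulChar.pow_apply_coe, hu'.unit_spec, hu1, one_pow]
      rw [Finset.sum_congr rfl hterm]
      simp
    · have hfil : (Finset.univ.filter fun y : F => y ^ d = u) = ∅ := by
        ext y
        simp only [Finset.mem_filter, Finset.mem_univ, true_and, Finset.notMem_empty, iff_false]
        exact fun h => hP ⟨y, h⟩
      have hu1 : χ u ≠ 1 := fun h => hP (hiff.mp h)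
      have hterm : ∀ ℓ ∈ Finset.range d, (χ ^ ℓ) u = (χ u) ^ ℓ := by
        intro ℓ _
        rw [← hu'.unit_spec, MulChar.pow_apply_coe]
      rw [hfil, Finset.sum_congr rfl hterm, geom_sum_eq hu1 d]
      have hpow : (χ u) ^ d = 1 := by
        rw [← MulChar.pow_apply' χ hd0.ne', hχd, MulChar.one_apply hu']
      rw [hpow, sub_self, zero_div]
      simp

open Finset in
/-- Gauss-sum inversion of a multiplicative character. -/
lemma inversion {F : Type} [Field F] [Fintype F] {χ' : MulChar F ℂ} (hχ' : χ' ≠ 1)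
    {ψ : AddChar F ℂ} (hψ : ψ.IsPrimitive) (u : F) :
    gaussSum χ' ψ * ∑ c : F, ψ (c * u) * (starRingEnd ℂ) (χ' (-c)) =
      χ' u * (Fintype.card F : ℂ) := by
  have hstar : ∀ a : F, (starRingEnd ℂ) (χ' a) = χ'⁻¹ a := fun a => by
    rw [starRingEnd_apply, MulChar.star_apply']
  simp_rw [hstar]
  rcases eq_or_ne u 0 with rfl | hu
  · have h1 : ∑ c : F, ψ (c * 0) * χ'⁻¹ (-c) = ∑ c : F, χ'⁻¹ c := by
      refine Fintype.sum_equiv (Equiv.neg F) _ _ fun x => ?_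
      simp
    rw [h1, MulChar.sum_eq_zero_of_ne_one (by simpa [inv_eq_one] using hχ'),
      MulChar.map_zero, zero_mul, mul_zero]
  · have h2 : ∑ c : F, ψ (c * u) * χ'⁻¹ (-c) = χ' u * ∑ c : F, ψ c * χ'⁻¹ (-c) := by
      rw [Finset.mul_sum]
      refine (Fintype.sum_equiv (Equiv.mulRight₀ u⁻¹ (inv_ne_zero hu)) _ _ fun x => ?_).symm
      have e1 : (Equiv.mulRight₀ u⁻¹ (inv_ne_zero hu)) x = x * u⁻¹ := rfl
      have e2 : -(x * u⁻¹) = (-x) * u⁻¹ := by ring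
      rw [e1, mul_assoc, inv_mul_cancel₀ hu, mul_one, e2, map_mul,
        MulChar.inv_apply' χ' u⁻¹, inv_inv]
      ring
    have h3 : ∑ c : F, ψ c * χ'⁻¹ (-c) = gaussSum χ'⁻¹ ψ⁻¹ := by
      unfold gaussSum
      refine Fintype.sum_equiv (Equiv.neg F) _ _ fun x => ?_
      have e1 : (Equiv.neg F) x = -x := rfl
      rw [e1, AddChar.inv_apply, neg_neg, mul_comm]
    rw [h2, h3, ← mul_assoc, mul_comm (gaussSum χ' ψ) (χ' u), mul_assoc,
      gaussSum_mul_gaussSum_eq_card hχ' hψ]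

/-- The canonical additive character as a bundled `AddChar`. -/
noncomputable def psiA (p : ℕ) [Fact p.Prime] (F : Type) [Field F] [Fintype F] [CharP F p] :
    AddChar F ℂ :=
  letI : Algebra (ZMod p) F := ZMod.algebra F p
  haveI : NeZero p := ⟨(Fact.out : p.Prime).ne_zero⟩
  (AddChar.zmodChar p
    ((Complex.isPrimitiveRoot_exp p (Fact.out : p.Prime).ne_zero).pow_eq_one)).compAddMonoidHom
    (Algebra.trace (ZMod p) F).toAddMonoidHom

lemma psiA_apply_pow (p : ℕ) [Fact p.Prime] (F : Type) [Field F] [Fintype F] [CharP F p]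
    (x : F) :
    psiA p F x =
      letI : Algebra (ZMod p) F := ZMod.algebra F p
      Complex.exp (2 * Real.pi * Complex.I / p) ^ (Algebra.trace (ZMod p) F x).val := by
  letI : Algebra (ZMod p) F := ZMod.algebra F p
  haveI : NeZero p := ⟨(Fact.out : p.Prime).ne_zero⟩
  have hζ : Complex.exp (2 * Real.pi * Complex.I / p) ^ p = 1 :=
    (Complex.isPrimitiveRoot_exp p (Fact.out : p.Prime).ne_zero).pow_eq_one
  show ((AddChar.zmodChar p hζ).compAddMonoidHom
      (Algebra.trace (ZMod p) F).toAddMonoidHom) x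
      = Complex.exp (2 * Real.pi * Complex.I / p) ^ (Algebra.trace (ZMod p) F x).val
  rw [AddChar.compAddMonoidHom_apply, AddChar.zmodChar_apply]
  rfl

lemma psiA_apply (p : ℕ) [Fact p.Prime] (F : Type) [Field F] [Fintype F] [CharP F p] (x : F) :
    psiA p F x = psiC p F x := by
  letI : Algebra (ZMod p) F := ZMod.algebra F p
  rw [psiA_apply_pow, ← Complex.exp_nat_mul]
  show Complex.exp _ = Complex.exp _
  congr 1
  ring

lemma psiA_primitive (p : ℕ) [Fact p.Prime] (F : Type) [Field F] [Fintype F] [CharP F p] :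
    (psiA p F).IsPrimitive := by
  apply AddChar.IsPrimitive.of_ne_one
  rw [AddChar.ne_one_iff]
  letI : Algebra (ZMod p) F := ZMod.algebra F p
  haveI : NeZero p := ⟨(Fact.out : p.Prime).ne_zero⟩
  have hrc : ringChar F = p := ringChar.eq F p
  obtain ⟨b, hb⟩ : ∃ b : F, Algebra.trace (ZMod p) F b ≠ 0 := by
    subst hrc
    obtain ⟨b, hb⟩ := FiniteField.trace_to_zmod_nondegenerate F (a := 1) one_ne_zero
    exact ⟨b, by simpa using hb⟩
  refine ⟨b, ?_⟩
  rw [psiA_apply_pow]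
  intro hone
  have hvp : p ∣ (Algebra.trace (ZMod p) F b).val :=
    ((Complex.isPrimitiveRoot_exp p (Fact.out : p.Prime).ne_zero).pow_eq_one_iff_dvd _).mp hone
  have hlt : (Algebra.trace (ZMod p) F b).val < p := ZMod.val_lt _
  have hv0 : (Algebra.trace (ZMod p) F b).val ≠ 0 := fun h0 => hb ((ZMod.val_eq_zero _).mp h0)
  have hle := Nat.le_of_dvd (Nat.pos_of_ne_zero hv0) hvp
  omega

theorem curve_card_gauss_expansion (p s n : ℕ) [Fact p.Prime] (hp : Odd p) (hs : 0 < s)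
    (hn : 0 < n) (q : ℕ) (hq : q = p ^ s)
    (Fq Fqn : Type) [Field Fq] [Field Fqn] [Fintype Fq] [Fintype Fqn] [Algebra Fq Fqn]
    [CharP Fqn p]
    (hcard : Fintype.card Fq = q) (hcardn : Fintype.card Fqn = q ^ n)
    (d : ℕ) (hd : d ∣ q ^ n - 1) (a : Fqn) (ha : a ≠ 0) (b : Fqn)
    (χ : MulChar Fqn ℂ) (hχ : orderOf χ = d) :
    (curveCard Fq Fqn d a b : ℂ)
      = (q : ℂ) ^ n + ((q : ℂ) ^ n)⁻¹ *
        ∑ ℓ ∈ Finset.Icc 1 (d - 1), gaussSum' p Fqn (χ ^ ℓ) *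
          ∑ c : Fqn,  -- χ^ℓ(0) = 0, so this equals the sum over c ≠ 0
            psiC p Fqn (c * b) * (starRingEnd ℂ) ((χ ^ ℓ) (-c)) *
              ∑ x : Fqn, psiC p Fqn (c * a * x * algebraMap Fq Fqn (Algebra.trace Fq Fqn x)) := by
  classical
  have hp2 : 2 ≤ p := (Fact.out : p.Prime).two_le
  have hq1 : 1 < q := by rw [hq]; exact Nat.one_lt_pow hs.ne' hp2
  have hcard1 : 1 < Fintype.card Fqn := by
    rw [hcardn]; exact Nat.one_lt_pow hn.ne' hq1
  have hd' : d ∣ Fintype.card Fqn - 1 := by rw [hcardn]; exact hd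
  have hd0 : 0 < d := Nat.pos_of_dvd_of_pos hd' (by omega)
  have hcardC : (Fintype.card Fqn : ℂ) = (q : ℂ) ^ n := by rw [hcardn]; push_cast; ring
  have hcard0 : (Fintype.card Fqn : ℂ) ≠ 0 := Nat.cast_ne_zero.mpr (by omega)
  set ψ := psiA p Fqn with hψdef
  have hψ : ψ.IsPrimitive := psiA_primitive p Fqn
  set T : Fqn → Fqn := fun x => algebraMap Fq Fqn (Algebra.trace Fq Fqn x) with hT
  set f : Fqn → Fqn := fun x => a * x * T x + b with hf
  -- Step 1
  have step1 : (curveCard Fq Fqn d a b : ℂ)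
      = ∑ x : Fqn, ((Finset.univ.filter fun y : Fqn => y ^ d = f x).card : ℂ) := by
    rw [curveCard, Nat.card_eq_fintype_card,
      Fintype.card_congr (Equiv.subtypeProdEquivSigmaSubtype
        fun x y : Fqn => y ^ d = a * x * T x + b),
      Fintype.card_sigma]
    push_cast
    refine Finset.sum_congr rfl fun x _ => ?_
    rw [Fintype.card_subtype]
  rw [step1]
  have step2 : ∀ x : Fqn, ((Finset.univ.filter fun y : Fqn => y ^ d = f x).card : ℂ)
      = (if f x = 0 then 1 else 0) + ∑ ℓ ∈ Finset.range d, (χ ^ ℓ) (f x) :=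
    fun x => rootCount_eq d hd' χ hχ (f x)
  simp_rw [step2]
  have hrange : Finset.range d = insert 0 (Finset.Icc 1 (d - 1)) := by
    ext m
    simp only [Finset.mem_range, Finset.mem_insert, Finset.mem_Icc]
    omega
  have h0notin : 0 ∉ Finset.Icc 1 (d - 1) := by simp
  simp_rw [hrange, Finset.sum_insert h0notin]
  rw [Finset.sum_add_distrib]
  have hconst : ∑ x : Fqn, ((if f x = 0 then 1 else 0) + ((χ ^ 0) (f x)
      + ∑ ℓ ∈ Finset.Icc 1 (d - 1), (χ ^ ℓ) (f x)))
      = (q : ℂ) ^ n + ∑ x : Fqn, ∑ ℓ ∈ Finset.Icc 1 (d - 1), (χ ^ ℓ) (f x) := by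
    have hone : ∀ x : Fqn, (if f x = 0 then (1 : ℂ) else 0) + (χ ^ 0) (f x) = 1 := by
      intro x
      rcases eq_or_ne (f x) 0 with h | h
      · rw [if_pos h, pow_zero, h, MulChar.map_zero, add_zero]
      · rw [if_neg h, pow_zero, MulChar.one_apply (isUnit_iff_ne_zero.mpr h), zero_add]
    calc ∑ x : Fqn, ((if f x = 0 then (1:ℂ) else 0) + ((χ ^ 0) (f x)
          + ∑ ℓ ∈ Finset.Icc 1 (d - 1), (χ ^ ℓ) (f x)))
        = ∑ x : Fqn, (1 + ∑ ℓ ∈ Finset.Icc 1 (d - 1), (χ ^ ℓ) (f x)) := by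
          refine Finset.sum_congr rfl fun x _ => ?_
          rw [← add_assoc, hone x]
      _ = (q : ℂ) ^ n + ∑ x : Fqn, ∑ ℓ ∈ Finset.Icc 1 (d - 1), (χ ^ ℓ) (f x) := by
          rw [Finset.sum_add_distrib, Finset.sum_const, Finset.card_univ, nsmul_eq_mul,
            mul_one, hcardC]
  rw [← Finset.sum_add_distrib, hconst]
  congr 1
  -- the character sums
  rw [Finset.sum_comm]
  rw [Finset.mul_sum]
  refine Finset.sum_congr rfl fun ℓ hℓ => ?_
  have hℓ' : 1 ≤ ℓ ∧ ℓ ≤ d - 1 := Finset.mem_Icc.mp hℓ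
  have hχℓ : χ ^ ℓ ≠ 1 := by
    intro h1
    have hdvd : d ∣ ℓ := hχ ▸ orderOf_dvd_of_pow_eq_one h1
    have := Nat.le_of_dvd (by omega) hdvd
    omega
  have hinv := fun u => inversion hχℓ hψ u
  have keyx : ∀ x : Fqn, ((χ ^ ℓ) (f x) : ℂ)
      = ((q:ℂ) ^ n)⁻¹ * (gaussSum (χ ^ ℓ) ψ
          * ∑ c : Fqn, ψ (c * f x) * (starRingEnd ℂ) ((χ ^ ℓ) (-c))) := by
    intro x
    rw [hinv (f x), hcardC]
    have hq0 : ((q : ℂ) ^ n) ≠ 0 := by rw [← hcardC]; exact hcard0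
    field_simp
    try rw [mul_div_assoc, div_self hq0, mul_one]
  simp_rw [keyx]
  rw [← Finset.mul_sum]
  congr 1
  rw [← Finset.mul_sum]
  have hgauss : gaussSum (χ ^ ℓ) ψ = gaussSum' p Fqn (χ ^ ℓ) := by
    unfold gaussSum gaussSum'
    exact Finset.sum_congr rfl fun x _ => by rw [psiA_apply]
  rw [hgauss]
  congr 1
  rw [Finset.sum_comm]
  refine Finset.sum_congr rfl fun c _ => ?_
  have hsplit : ∀ x : Fqn, ψ (c * f x) = ψ (c * b) * ψ (c * a * x * T x) := by
    intro x
    have : c * f x = c * b + c * a * x * T x := by rw [hf]; ring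
    rw [this, AddChar.map_add_eq_mul]
  calc ∑ x : Fqn, ψ (c * f x) * (starRingEnd ℂ) ((χ ^ ℓ) (-c))
      = ∑ x : Fqn, (ψ (c * b) * (starRingEnd ℂ) ((χ ^ ℓ) (-c))) * ψ (c * a * x * T x) := by
        refine Finset.sum_congr rfl fun x _ => ?_
        rw [hsplit x]; ring
    _ = psiC p Fqn (c * b) * (starRingEnd ℂ) ((χ ^ ℓ) (-c))
          * ∑ x : Fqn, psiC p Fqn (c * a * x * T x) := by
        rw [← Finset.mul_sum, ← psiA_apply]
        congr 1
        exact Finset.sum_congr rfl fun x _ => by rw [psiA_apply]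
end

section
/- Let q = p^s with p an odd prime, n odd, χ₂ the quadratic character of F_{q^n}*, a ∈ F_{q^n}*, b ∈ F_{q^n} with Tr(b/a) = 0, and τ = 1 if p ≡ 1 (mod 4), τ = i if p ≡ 3 (mod 4). Then the number of F_{q^n}-points on y² = a·x·Tr(x) + b equals q^n + q^{n−1}χ₂(b) + τ^{(n+1)s}·χ₂(−a)·(q−1)·q^{(n−1)/2}. -/
set_option linter.unusedSectionVars false

open Finset

/-- `τ = 1` if `p ≡ 1 (mod 4)`, `τ = i` if `p ≡ 3 (mod 4)`. -/
noncomputable def tauC (p : ℕ) : ℂ := if p % 4 = 1 then 1 else Complex.I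

namespace CurveAux

/-- The complex-valued quadratic character. -/
noncomputable def qc (F : Type*) [Field F] [Fintype F] [DecidableEq F] : MulChar F ℂ :=
  (quadraticChar F).ringHomComp (Int.castRingHom ℂ)

variable {F : Type*} [Field F] [Fintype F] [DecidableEq F]

lemma qc_apply (a : F) : qc F a = ((quadraticChar F a : ℤ) : ℂ) := rfl

lemma qc_quadratic : (qc F).IsQuadratic := (quadraticChar_isQuadratic F).comp _

lemma qc_zero : qc F 0 = 0 := by
  simp [qc_apply]

lemma qc_ne_one (hF : ringChar F ≠ 2) : qc F ≠ 1 := by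
  obtain ⟨b, hb⟩ := FiniteField.exists_nonsquare hF
  have hb0 : b ≠ 0 := by
    rintro rfl; exact hb ⟨0, (mul_zero 0).symm⟩
  intro h
  have h1 : qc F b = -1 := by
    rw [qc_apply, quadraticChar_neg_one_iff_not_isSquare.mpr hb]; norm_num
  rw [h] at h1
  have h2 : (1 : MulChar F ℂ) b = 1 := by
    rw [← (isUnit_iff_ne_zero.mpr hb0).unit_spec, MulChar.one_apply_coe]
  rw [h2] at h1
  norm_num at h1

lemma qc_sq_eq_one {a : F} (ha : a ≠ 0) : qc F a * qc F a = 1 := by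
  rcases qc_quadratic a with h | h | h
  · exfalso
    rw [qc_apply] at h
    have : quadraticChar F a = 0 := by exact_mod_cast h
    exact ha (quadraticChar_eq_zero_iff.mp this)
  · rw [h]; norm_num
  · rw [h]; norm_num

lemma qc_mul_self (a : F) : qc F a * qc F a = if a = 0 then 0 else 1 := by
  split_ifs with h
  · simp [h, qc_zero]
  · exact qc_sq_eq_one h

/-- Any character of order 2 is the quadratic character. -/
lemma eq_qc (hF : ringChar F ≠ 2) {χ : MulChar F ℂ} (h1 : χ ≠ 1) (h2 : χ ^ 2 = 1) :
    χ = qc F := by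
  obtain ⟨g, hg⟩ := IsCyclic.exists_generator (α := Fˣ)
  have key : ∀ χ' : MulChar F ℂ, χ' ≠ 1 → χ' ^ 2 = 1 → χ' ↑g = -1 := by
    intro χ' h1' h2'
    have hsq : χ' ↑g * χ' ↑g = 1 := by
      have h3 : (χ' ^ 2) (↑g) = 1 := by rw [h2']; simp [MulChar.one_apply_coe]
      rwa [MulChar.pow_apply' _ two_ne_zero, pow_two] at h3
    rcases mul_self_eq_one_iff.mp hsq with h | h
    · exfalso; apply h1'; apply MulChar.ext; intro a
      obtain ⟨k, hk⟩ := mem_powers_iff_mem_zpowers.mpr (hg a)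
      have hk' : g ^ k = a := hk
      rw [MulChar.one_apply_coe, ← hk', Units.val_pow_eq_pow_val, map_pow, h, one_pow]
    · exact h
  have hq2 : (qc F) ^ 2 = 1 := qc_quadratic.sq_eq_one
  apply MulChar.ext; intro a
  obtain ⟨k, hk⟩ := mem_powers_iff_mem_zpowers.mpr (hg a)
  have hk' : g ^ k = a := hk
  rw [← hk', Units.val_pow_eq_pow_val, map_pow, map_pow,
    key χ h1 h2, key (qc F) (qc_ne_one hF) hq2]

lemma card_sqrts (hF : ringChar F ≠ 2) (c : F) :
    ((Fintype.card {y : F // y ^ 2 = c} : ℕ) : ℂ) = 1 + qc F c := by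
  have h := quadraticChar_card_sqrts hF c
  have h0 : Fintype.card {y : F // y ^ 2 = c} = {x : F | x ^ 2 = c}.toFinset.card := by
    rw [Set.toFinset_card]; rfl
  rw [h0, qc_apply]
  have h2 := congrArg (fun z : ℤ => (z : ℂ)) h
  push_cast at h2
  rw [h2]; ring

lemma filter_sq_card (hF : ringChar F ≠ 2) (c : F) :
    (((univ.filter (fun x : F => x * x = c)).card : ℕ) : ℂ) = 1 + qc F c := by
  rw [← card_sqrts hF c]
  congr 1
  rw [Fintype.card_subtype]
  congr 1
  ext x
  simp [pow_two]

/-- Gauss sum shift. -/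
lemma gauss_shift (ψ : AddChar F ℂ) {w : F} (hw : w ≠ 0) :
    ∑ u : F, qc F u * ψ (w * u) = qc F w * gaussSum (qc F) ψ := by
  have h := gaussSum_mulShift (qc F) ψ (Units.mk0 w hw)
  have h2 : gaussSum (qc F) (ψ.mulShift (Units.mk0 w hw)) = ∑ u : F, qc F u * ψ (w * u) := by
    simp [gaussSum, AddChar.mulShift_apply]
  rw [h2] at h
  calc ∑ u : F, qc F u * ψ (w * u)
      = (qc F w * qc F w) * ∑ u : F, qc F u * ψ (w * u) := by rw [qc_sq_eq_one hw, one_mul]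
    _ = qc F w * gaussSum (qc F) ψ := by rw [mul_assoc]; rw [show qc F (Units.mk0 w hw : F) = qc F w from rfl] at h; rw [h]

lemma sum_psi_sq (hF : ringChar F ≠ 2) (ψ : AddChar F ℂ) (hψ : ψ ≠ 1) {w : F} (hw : w ≠ 0) :
    ∑ x : F, ψ (w * (x * x)) = qc F w * gaussSum (qc F) ψ := by
  have hprim : ψ.IsPrimitive := AddChar.IsPrimitive.of_ne_one hψ
  have h1 : ∑ x : F, ψ (w * (x * x))
      = ∑ u : F, ∑ x ∈ univ.filter (fun x : F => x * x = u), ψ (w * (x * x)) :=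
    (Finset.sum_fiberwise univ (fun x => x * x) (fun x => ψ (w * (x * x)))).symm
  rw [h1]
  have h2 : ∀ u : F, ∑ x ∈ univ.filter (fun x : F => x * x = u), ψ (w * (x * x))
      = ((univ.filter (fun x : F => x * x = u)).card : ℂ) * ψ (w * u) := by
    intro u
    rw [Finset.sum_congr rfl (fun x hx => by rw [(Finset.mem_filter.mp hx).2]),
      Finset.sum_const, nsmul_eq_mul]
  rw [Finset.sum_congr rfl fun u _ => h2 u]
  have h3 : ∀ u : F, ((univ.filter (fun x : F => x * x = u)).card : ℂ) * ψ (w * u)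
      = ψ (w * u) + qc F u * ψ (w * u) := by
    intro u; rw [filter_sq_card hF u]; ring
  rw [Finset.sum_congr rfl fun u _ => h3 u, Finset.sum_add_distrib]
  have h4 : ∑ u : F, ψ (w * u) = 0 := by
    have : ψ.mulShift w ≠ 1 := hprim hw
    simpa [AddChar.mulShift_apply] using AddChar.sum_eq_zero_of_ne_one this
  rw [h4, zero_add, gauss_shift ψ hw]

lemma sum_mulShift_eq {ψ : AddChar F ℂ} (hψ : ψ.IsPrimitive) (z : F) :
    ∑ l : F, ψ (l * z) = if z = 0 then (Fintype.card F : ℂ) else 0 := by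
  split_ifs with h
  · subst h; simp
  · have hne : ψ.mulShift z ≠ 1 := hψ h
    have := AddChar.sum_eq_zero_of_ne_one hne
    simpa [AddChar.mulShift_apply, mul_comm] using this

lemma ringChar_ne_two_of_odd_card (hodd : Odd (Fintype.card F)) : ringChar F ≠ 2 := by
  intro h2
  obtain ⟨m, hc⟩ := FiniteField.card F (ringChar F)
  rw [hc.2, h2] at hodd
  have : Even (2 ^ (m : ℕ)) := (Nat.even_pow).mpr ⟨even_two, Nat.pos_iff_ne_zero.mp m.pos⟩
  exact (Nat.not_even_iff_odd.mpr hodd).elim this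

section TwoFields

variable {Fq Fqn : Type} [Field Fq] [Field Fqn] [Fintype Fq] [Fintype Fqn] [Algebra Fq Fqn]
variable [DecidableEq Fq] [DecidableEq Fqn]

lemma isSquare_algebraMap_iff {q n : ℕ} (hq : Odd q) (hq1 : 1 < q) (hn : Odd n)
    (hcard : Fintype.card Fq = q) (hcardn : Fintype.card Fqn = q ^ n)
    {t : Fq} (ht : t ≠ 0) : IsSquare (algebraMap Fq Fqn t) ↔ IsSquare t := by
  have hq2 : ringChar Fq ≠ 2 := ringChar_ne_two_of_odd_card (hcard ▸ hq)
  have hqn2 : ringChar Fqn ≠ 2 := ringChar_ne_two_of_odd_card (hcardn ▸ hq.pow)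
  have ht' : algebraMap Fq Fqn t ≠ 0 := fun h => ht ((algebraMap Fq Fqn).injective
    (by rw [h, map_zero]))
  rw [FiniteField.isSquare_iff hqn2 ht', FiniteField.isSquare_iff hq2 ht, hcard, hcardn]
  set k := q / 2 with hk
  set S := ∑ i ∈ range n, q ^ i with hS
  have hqodd : q % 2 = 1 := Nat.odd_iff.mp hq
  have hqn_odd : q ^ n % 2 = 1 := Nat.odd_iff.mp hq.pow
  have hK : q ^ n / 2 = k * S := by
    have h2k : (2 : ℤ) * ((k : ℕ) : ℤ) = (q : ℤ) - 1 := by omega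
    have h2K : (2 : ℤ) * ((q ^ n / 2 : ℕ) : ℤ) = ((q ^ n : ℕ) : ℤ) - 1 := by omega
    have hgeom' : ((q : ℤ) - 1) * ((S : ℕ) : ℤ) = ((q ^ n : ℕ) : ℤ) - 1 := by
      rw [hS]
      push_cast
      rw [mul_comm]
      exact geom_sum_mul (q : ℤ) n
    have h1 : (2 : ℤ) * ((k * S : ℕ) : ℤ) = (2 : ℤ) * ((q ^ n / 2 : ℕ) : ℤ) := by
      push_cast
      rw [← mul_assoc]
      push_cast at h2k hgeom' h2K
      rw [h2k, hgeom', h2K]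
    exact_mod_cast (mul_left_cancel₀ (two_ne_zero (α := ℤ)) h1).symm
  have hSodd : S % 2 = 1 := by
    rw [hS, Finset.sum_nat_mod,
      Finset.sum_congr rfl (fun i _ => Nat.odd_iff.mp (hq.pow))]
    simpa using Nat.odd_iff.mp hn
  set v := t ^ k with hv
  have hvv : v * v = 1 := by
    rw [hv, ← pow_add]
    have h2k : k + k = q - 1 := by omega
    rw [h2k, ← hcard]
    exact FiniteField.pow_card_sub_one_eq_one t ht
  have hmain : (algebraMap Fq Fqn t) ^ (q ^ n / 2) = algebraMap Fq Fqn (v ^ S) := by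
    rw [hK, ← map_pow, hv, ← pow_mul]
  rcases mul_self_eq_one_iff.mp hvv with h | h
  · rw [hmain, h, one_pow, map_one]
    simp [← hv, h]
  · have hS1 : v ^ S = -1 := by rw [h]; exact Odd.neg_one_pow (Nat.odd_iff.mpr hSodd)
    rw [hmain, hS1, map_neg, map_one]
    have hne : (-1 : Fqn) ≠ 1 := Ring.neg_one_ne_one_of_char_ne_two hqn2
    have hne' : (-1 : Fq) ≠ 1 := Ring.neg_one_ne_one_of_char_ne_two hq2
    simp [hne, ← hv, h, hne']

lemma qc_algebraMap {q n : ℕ} (hq : Odd q) (hq1 : 1 < q) (hn : Odd n)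
    (hcard : Fintype.card Fq = q) (hcardn : Fintype.card Fqn = q ^ n) (t : Fq) :
    qc Fqn (algebraMap Fq Fqn t) = qc Fq t := by
  have hq2 : ringChar Fq ≠ 2 := ringChar_ne_two_of_odd_card (hcard ▸ hq)
  rcases eq_or_ne t 0 with rfl | ht
  · rw [map_zero, qc_zero, qc_zero]
  · have ht' : algebraMap Fq Fqn t ≠ 0 := fun h => ht ((algebraMap Fq Fqn).injective
      (by rw [h, map_zero]))
    rw [qc_apply, qc_apply]
    by_cases h : IsSquare t
    · rw [(quadraticChar_one_iff_isSquare ht').mpr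
        ((isSquare_algebraMap_iff hq hq1 hn hcard hcardn ht).mpr h),
        (quadraticChar_one_iff_isSquare ht).mpr h]
    · rw [quadraticChar_neg_one_iff_not_isSquare.mpr
        (fun hh => h ((isSquare_algebraMap_iff hq hq1 hn hcard hcardn ht).mp hh)),
        quadraticChar_neg_one_iff_not_isSquare.mpr h]

lemma card_trace_fiber (t : Fq) :
    (univ.filter (fun x : Fqn => Algebra.trace Fq Fqn x = t)).card * Fintype.card Fq
      = Fintype.card Fqn := by
  have hsur : Function.Surjective (Algebra.trace Fq Fqn) := Algebra.trace_surjective Fq Fqn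
  have hcard : ∀ t₁ t₂ : Fq, (univ.filter (fun x : Fqn => Algebra.trace Fq Fqn x = t₁)).card
      = (univ.filter (fun x : Fqn => Algebra.trace Fq Fqn x = t₂)).card := by
    intro t₁ t₂
    obtain ⟨d₁, hd₁⟩ := hsur t₁
    obtain ⟨d₂, hd₂⟩ := hsur t₂
    apply Finset.card_bij (fun x _ => x - d₁ + d₂)
    · intro x hx
      simp only [Finset.mem_filter, Finset.mem_univ, true_and] at hx ⊢
      rw [map_add, map_sub, hx, hd₁, hd₂, sub_self, zero_add]
    · intro x hx y hy hxy
      have := congrArg (fun z => z - d₂ + d₁) hxy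
      simpa using this
    · intro y hy
      refine ⟨y - d₂ + d₁, ?_, by ring⟩
      simp only [Finset.mem_filter, Finset.mem_univ, true_and] at hy ⊢
      rw [map_add, map_sub, hy, hd₂, hd₁, sub_self, zero_add]
  have htot : ∑ s : Fq, (univ.filter (fun x : Fqn => Algebra.trace Fq Fqn x = s)).card
      = Fintype.card Fqn := by
    rw [← Finset.card_univ (α := Fqn),
      Finset.card_eq_sum_card_fiberwise (f := Algebra.trace Fq Fqn) (fun x _ => mem_univ _)]
  calc (univ.filter (fun x : Fqn => Algebra.trace Fq Fqn x = t)).card * Fintype.card Fq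
      = ∑ _s : Fq, (univ.filter (fun x : Fqn => Algebra.trace Fq Fqn x = t)).card := by
        rw [Finset.sum_const, Finset.card_univ, smul_eq_mul, mul_comm]
    _ = ∑ s : Fq, (univ.filter (fun x : Fqn => Algebra.trace Fq Fqn x = s)).card :=
        Finset.sum_congr rfl (fun s _ => hcard t s)
    _ = Fintype.card Fqn := htot

end TwoFields

lemma addChar_map_sum {A M : Type*} [AddCommMonoid A] [CommMonoid M] (ψ : AddChar A M)
    {ι : Type*} (s : Finset ι) (f : ι → A) : ψ (∑ i ∈ s, f i) = ∏ i ∈ s, ψ (f i) := by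
  classical
  induction s using Finset.induction_on with
  | empty => simp
  | insert _ _ h ih => rw [Finset.sum_insert h, Finset.prod_insert h, AddChar.map_add_eq_mul, ih]

lemma exists_primitive_char' (F : Type) [Field F] [Fintype F] :
    ∃ ψ : AddChar F ℂ, ψ.IsPrimitive := by
  obtain ⟨m, hprime, hcardF⟩ := FiniteField.card F (ringChar F)
  haveI : Fact (ringChar F).Prime := ⟨hprime⟩
  haveI : NeZero (ringChar F) := ⟨hprime.ne_zero⟩
  have hζ := Complex.isPrimitiveRoot_exp (ringChar F) hprime.ne_zero
  have hψ₀ : (AddChar.zmodChar (ringChar F)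
      ((IsPrimitiveRoot.iff_def _ (ringChar F)).mp hζ).left).IsPrimitive :=
    AddChar.zmodChar_primitive_of_primitive_root (ringChar F) hζ
  set ψ₀ := AddChar.zmodChar (ringChar F)
      ((IsPrimitiveRoot.iff_def _ (ringChar F)).mp hζ).left with hψ₀def
  letI : Algebra (ZMod (ringChar F)) F := ZMod.algebra F (ringChar F)
  refine ⟨ψ₀.compAddMonoidHom (Algebra.trace (ZMod (ringChar F)) F).toAddMonoidHom,
    AddChar.IsPrimitive.of_ne_one ?_⟩
  obtain ⟨a, ha⟩ := FiniteField.trace_to_zmod_nondegenerate F (one_ne_zero (α := F))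
  rw [one_mul] at ha
  apply AddChar.ne_one_iff.mpr
  refine ⟨a, fun hf => ha ?_⟩
  have hf' : ψ₀ (Algebra.trace (ZMod (ringChar F)) F a) = 1 := hf
  exact (hψ₀.zmod_char_eq_one_iff (ringChar F) _).mp hf'

section BigLemma

variable {Fq Fqn : Type} [Field Fq] [Field Fqn] [Fintype Fq] [Fintype Fqn] [Algebra Fq Fqn]
variable [DecidableEq Fq] [DecidableEq Fqn]

set_option maxHeartbeats 2000000 in
lemma gauss_eq_pow {q n : ℕ} (hq : Odd q) (hq1 : 1 < q) (hn : Odd n)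
    (hcard : Fintype.card Fq = q) (hcardn : Fintype.card Fqn = q ^ n)
    {ψ : AddChar Fq ℂ} (hψ : ψ.IsPrimitive) :
    gaussSum (qc Fqn) (ψ.compAddMonoidHom (Algebra.trace Fq Fqn).toAddMonoidHom)
      = gaussSum (qc Fq) ψ ^ n := by
  classical
  have hq2 : ringChar Fq ≠ 2 := ringChar_ne_two_of_odd_card (hcard ▸ hq)
  have hqn2 : ringChar Fqn ≠ 2 := ringChar_ne_two_of_odd_card (hcardn ▸ hq.pow)
  have hrank : Module.finrank Fq Fqn = n := by
    have h := Module.card_eq_pow_finrank (K := Fq) (V := Fqn)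
    rw [hcard, hcardn] at h
    exact Nat.pow_right_injective hq1 h.symm
  haveI : Invertible (2 : Fq) := invertibleOfNonzero (Ring.two_ne_zero hq2)
  have hsym := Algebra.traceForm_isSymm Fq (S := Fqn)
  set B := Algebra.traceForm Fq Fqn with hB
  set Q : QuadraticForm Fq Fqn := B.toQuadraticMap with hQdef
  have hassoc : QuadraticMap.associated (R := Fq) Q = B :=
    QuadraticMap.associated_left_inverse Fq hsym.eq
  obtain ⟨v, hv⟩ := LinearMap.BilinForm.exists_orthogonal_basis (LinearMap.BilinForm.isSymm_iff.1 hsym)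
  have hv' : (QuadraticMap.associated (R := Fq) Q).IsOrthoᵢ v := by rw [hassoc]; exact hv
  have hQB : ∀ x : Fqn, Q x = B x x := fun x => rfl
  have hBtr : ∀ x y : Fqn, B x y = Algebra.trace Fq Fqn (x * y) := fun x y => rfl
  have hw0 : ∀ i, Q (v i) ≠ 0 := by
    intro i hzero
    have hsep : B.SeparatingLeft := (traceForm_nondegenerate Fq Fqn).1
    apply hv.not_isOrtho_basis_self_of_separatingLeft hsep i
    rw [← hQB]
    exact hzero
  set ψn := ψ.compAddMonoidHom (Algebra.trace Fq Fqn).toAddMonoidHom with hψndef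
  have hψnapp : ∀ x, ψn x = ψ (Algebra.trace Fq Fqn x) := fun _ => rfl
  have hψ1 : ψ ≠ 1 := by
    have h := hψ (a := 1) one_ne_zero
    rwa [AddChar.mulShift_one] at h
  have hψn1 : ψn ≠ 1 := by
    obtain ⟨y, hy⟩ := AddChar.ne_one_iff.mp hψ1
    obtain ⟨x, hx⟩ := Algebra.trace_surjective Fq Fqn y
    exact AddChar.ne_one_iff.mpr ⟨x, by rw [hψnapp, hx]; exact hy⟩
  have hstep1 : ∑ x : Fqn, ψn (x * x) = gaussSum (qc Fqn) ψn := by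
    have h := sum_psi_sq hqn2 ψn hψn1 (one_ne_zero (α := Fqn))
    have hqc1 : qc Fqn (1 : Fqn) = 1 := by
      rw [qc_apply]; norm_num
    simpa [hqc1] using h
  have hstep2 : ∑ x : Fqn, ψn (x * x) = ∑ x : Fqn, ψ (Q x) := by
    apply Finset.sum_congr rfl
    intro x _
    rw [hψnapp, hQB, hBtr]
  let e := QuadraticForm.isometryEquivWeightedSumSquares Q v hv'
  have hstep3 : ∑ x : Fqn, ψ (Q x)
      = ∑ y : Fin (Module.finrank Fq Fqn) → Fq,
          ψ (QuadraticMap.weightedSumSquares Fq (fun i => Q (v i)) y) := by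
    rw [← Equiv.sum_comp (e : Fqn ≃ (Fin (Module.finrank Fq Fqn) → Fq))
      (fun y => ψ (QuadraticMap.weightedSumSquares Fq (fun i => Q (v i)) y))]
    apply Finset.sum_congr rfl
    intro x _
    congr 1
    exact (e.map_app x).symm
  have expand : ∀ y : Fin (Module.finrank Fq Fqn) → Fq,
      ψ (QuadraticMap.weightedSumSquares Fq (fun i => Q (v i)) y)
        = ∏ i, ψ (Q (v i) * (y i * y i)) := by
    intro y
    rw [QuadraticMap.weightedSumSquares_apply, addChar_map_sum]
    exact Finset.prod_congr rfl fun i _ => by rw [smul_eq_mul]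
  have hstep4 : ∑ y : Fin (Module.finrank Fq Fqn) → Fq,
      ψ (QuadraticMap.weightedSumSquares Fq (fun i => Q (v i)) y)
        = ∏ i : Fin (Module.finrank Fq Fqn), (qc Fq (Q (v i)) * gaussSum (qc Fq) ψ) :=
    calc ∑ y : Fin (Module.finrank Fq Fqn) → Fq,
        ψ (QuadraticMap.weightedSumSquares Fq (fun i => Q (v i)) y)
        = ∑ y : Fin (Module.finrank Fq Fqn) → Fq, ∏ i, ψ (Q (v i) * (y i * y i)) :=
          Finset.sum_congr rfl fun y _ => expand y
      _ = ∑ y ∈ Fintype.piFinset (fun _ : Fin (Module.finrank Fq Fqn) => (univ : Finset Fq)),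
            ∏ i, ψ (Q (v i) * (y i * y i)) := by rw [Fintype.piFinset_univ]
      _ = ∏ i : Fin (Module.finrank Fq Fqn), ∑ c : Fq, ψ (Q (v i) * (c * c)) :=
          (Finset.prod_univ_sum (fun _ => (univ : Finset Fq)) (fun i c => ψ (Q (v i) * (c * c)))).symm
      _ = ∏ i : Fin (Module.finrank Fq Fqn), (qc Fq (Q (v i)) * gaussSum (qc Fq) ψ) :=
          Finset.prod_congr rfl fun i _ => sum_psi_sq hq2 ψ hψ1 (hw0 i)
  have hprod_ne : (∏ i, Q (v i)) ≠ 0 := Finset.prod_ne_zero_iff.mpr fun i _ => hw0 i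
  have hsquare : IsSquare (∏ i, Q (v i)) := by
    haveI : FiniteDimensional Fq Fqn := inferInstance
    let eσ : Fin (Module.finrank Fq Fqn) ≃ (Fqn ≃ₐ[Fq] Fqn) :=
      Fintype.equivOfCardEq (by rw [Fintype.card_fin, ← Nat.card_eq_fintype_card, IsGalois.card_aut_eq_finrank])
    let A : Matrix (Fin (Module.finrank Fq Fqn)) (Fin (Module.finrank Fq Fqn)) Fqn :=
      Matrix.of fun i k => eσ k (v i)
    have hkey : A * A.transpose = Matrix.diagonal (fun i => algebraMap Fq Fqn (Q (v i))) := by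
      ext i j
      rw [Matrix.mul_apply]
      simp only [Matrix.transpose_apply, Matrix.of_apply, A]
      have h1 : ∑ k, eσ k (v i) * eσ k (v j)
          = ∑ σ : Fqn ≃ₐ[Fq] Fqn, σ (v i) * σ (v j) :=
        Fintype.sum_equiv eσ _ _ (fun k => rfl)
      rw [h1]
      have h2 : ∀ σ : Fqn ≃ₐ[Fq] Fqn, σ (v i) * σ (v j) = σ (v i * v j) :=
        fun σ => (map_mul σ _ _).symm
      rw [Finset.sum_congr rfl fun σ _ => h2 σ, ← trace_eq_sum_automorphisms]
      by_cases hij : i = j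
      · subst hij
        rw [Matrix.diagonal_apply_eq]
        rw [hQB, hBtr]
      · rw [Matrix.diagonal_apply_ne _ hij]
        have h3 : B (v i) (v j) = 0 := hv hij
        rw [← hBtr, h3, map_zero]
    have hdet : algebraMap Fq Fqn (∏ i, Q (v i)) = A.det * A.det := by
      have h5 := congrArg Matrix.det hkey
      rw [Matrix.det_mul, Matrix.det_transpose, Matrix.det_diagonal] at h5
      rw [map_prod (algebraMap Fq Fqn) _ univ]
      exact h5.symm
    have hsq' : IsSquare (algebraMap Fq Fqn (∏ i, Q (v i))) := ⟨A.det, hdet⟩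
    exact (isSquare_algebraMap_iff hq hq1 hn hcard hcardn hprod_ne).mp hsq'
  have hqcprod : qc Fq (∏ i, Q (v i)) = 1 := by
    rw [qc_apply, (quadraticChar_one_iff_isSquare hprod_ne).mpr hsquare]
    norm_num
  have hstep5 : ∏ i : Fin (Module.finrank Fq Fqn), (qc Fq (Q (v i)) * gaussSum (qc Fq) ψ)
      = gaussSum (qc Fq) ψ ^ (Module.finrank Fq Fqn) := by
    rw [Finset.prod_mul_distrib, Finset.prod_const, ← map_prod (qc Fq) _ univ, hqcprod, one_mul,
      Finset.card_univ, Fintype.card_fin]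
  rw [← hstep1, hstep2, hstep3, hstep4, hstep5, hrank]

end BigLemma

lemma three_pow_mod_four (s : ℕ) : 3 ^ s % 4 = if s % 2 = 0 then 1 else 3 := by
  induction s with
  | zero => rfl
  | succ s ih =>
    rw [pow_succ, Nat.mul_mod, ih]
    by_cases h : s % 2 = 0
    · have h1 : (s + 1) % 2 = 1 := by omega
      simp [h, h1]
    · have h1 : (s + 1) % 2 = 0 := by omega
      simp [h, h1]

lemma eps_pow_eq_tau (p s k : ℕ) (hodd : Odd p) :
    (if p ^ s % 4 = 1 then (1:ℂ) else -1) ^ k = (tauC p ^ 2) ^ (k * s) := by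
  have hp4 : p % 4 = 1 ∨ p % 4 = 3 := by
    have h2 : p % 2 = 1 := Nat.odd_iff.mp hodd
    omega
  have hps : p ^ s % 4 = (p % 4) ^ s % 4 := by rw [Nat.pow_mod]
  rcases hp4 with h | h
  · have h1 : p ^ s % 4 = 1 := by rw [hps, h, one_pow]; rfl
    rw [if_pos h1, tauC, if_pos h, one_pow, one_pow, one_pow]
  · have htau : tauC p = Complex.I := by rw [tauC, if_neg (by omega)]
    have htau2 : tauC p ^ 2 = -1 := by rw [htau, Complex.I_sq]
    have h3 : p ^ s % 4 = if s % 2 = 0 then 1 else 3 := by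
      rw [hps, h, three_pow_mod_four]
    rw [htau2]
    by_cases hs : s % 2 = 0
    · rw [h3, if_pos hs, if_pos rfl, one_pow]
      have heven : Even (k * s) := (Nat.even_iff.mpr hs).mul_left k
      rw [heven.neg_one_pow]
    · rw [h3, if_neg hs, if_neg (by omega)]
      rcases Nat.even_or_odd k with hk | hk
      · rw [hk.neg_one_pow, (hk.mul_right s).neg_one_pow]
      · rw [hk.neg_one_pow, (hk.mul (Nat.odd_iff.mpr (by omega))).neg_one_pow]

lemma qc_inv {a : F} : qc F a⁻¹ = qc F a := by
  rcases eq_or_ne a 0 with rfl | h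
  · rw [inv_zero]
  · have h1 : qc F a⁻¹ * qc F a = 1 := by rw [← map_mul, inv_mul_cancel₀ h, map_one]
    have h2 := qc_sq_eq_one h
    calc qc F a⁻¹ = qc F a⁻¹ * (qc F a * qc F a) := by rw [h2, mul_one]
      _ = (qc F a⁻¹ * qc F a) * qc F a := by ring
      _ = qc F a := by rw [h1, one_mul]

end CurveAux

theorem curve_d2_n_odd_B_zero (p s n : ℕ) [Fact p.Prime] (hp : Odd p) (hs : 0 < s) (hn : 0 < n)
    (q : ℕ) (hq : q = p ^ s)
    (Fq Fqn : Type) [Field Fq] [Field Fqn] [Fintype Fq] [Fintype Fqn] [Algebra Fq Fqn]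
    (hcard : Fintype.card Fq = q) (hcardn : Fintype.card Fqn = q ^ n)
    (a : Fqn) (ha : a ≠ 0) (b : Fqn)
    (χ₂ : MulChar Fqn ℂ) (hχ : orderOf χ₂ = 2)
    (hnodd : Odd n) (hB : Algebra.trace Fq Fqn (b / a) = 0) :
    (curveCard Fq Fqn 2 a b : ℂ)
      = (q : ℂ) ^ n + (q : ℂ) ^ (n - 1) * χ₂ b
        + tauC p ^ ((n + 1) * s) * χ₂ (-a) * ((q : ℂ) - 1) * (q : ℂ) ^ ((n - 1) / 2) := by
  classical
  have hp_prime : p.Prime := Fact.out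
  have hq_odd : Odd q := hq ▸ hp.pow
  have hq1 : 1 < q := by rw [hq]; exact Nat.one_lt_pow hs.ne' hp_prime.one_lt
  have hq2 : ringChar Fq ≠ 2 := CurveAux.ringChar_ne_two_of_odd_card (hcard ▸ hq_odd)
  have hqn2 : ringChar Fqn ≠ 2 := CurveAux.ringChar_ne_two_of_odd_card (hcardn ▸ hq_odd.pow)
  have hq0 : (q : ℂ) ≠ 0 := Nat.cast_ne_zero.mpr (by omega)
  have hχ1 : χ₂ ≠ 1 := by
    intro h; rw [h, orderOf_one] at hχ; omega
  have hχsq : χ₂ ^ 2 = 1 := by rw [← hχ]; exact pow_orderOf_eq_one χ₂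
  have hχeq : χ₂ = CurveAux.qc Fqn := CurveAux.eq_qc hqn2 hχ1 hχsq
  subst hχeq
  obtain ⟨ψ, hψ⟩ := CurveAux.exists_primitive_char' Fq
  -- Step A+B : point count as q^n plus character sum
  have hN : (curveCard Fq Fqn 2 a b : ℂ)
      = (q : ℂ) ^ n + ∑ x : Fqn,
          CurveAux.qc Fqn (a * x * algebraMap Fq Fqn (Algebra.trace Fq Fqn x) + b) := by
    have e1 : {xy : Fqn × Fqn //
        xy.2 ^ 2 = a * xy.1 * algebraMap Fq Fqn (Algebra.trace Fq Fqn xy.1) + b}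
        ≃ Σ x : Fqn, {y : Fqn // y ^ 2 = a * x * algebraMap Fq Fqn (Algebra.trace Fq Fqn x) + b} :=
      Equiv.subtypeProdEquivSigmaSubtype
        (fun (x y : Fqn) => y ^ 2 = a * x * algebraMap Fq Fqn (Algebra.trace Fq Fqn x) + b)
    rw [curveCard, Nat.card_eq_fintype_card, Fintype.card_congr e1, Fintype.card_sigma]
    push_cast
    rw [Finset.sum_congr rfl (fun x _ => CurveAux.card_sqrts hqn2
      (a * x * algebraMap Fq Fqn (Algebra.trace Fq Fqn x) + b)), Finset.sum_add_distrib]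
    congr 1
    rw [Finset.sum_const, Finset.card_univ, hcardn, nsmul_eq_mul, mul_one]
    push_cast
    ring
  -- fiberwise decomposition
  have hfib : ∑ x : Fqn,
      CurveAux.qc Fqn (a * x * algebraMap Fq Fqn (Algebra.trace Fq Fqn x) + b)
      = ∑ t : Fq, ∑ x ∈ univ.filter (fun x : Fqn => Algebra.trace Fq Fqn x = t),
          CurveAux.qc Fqn (a * algebraMap Fq Fqn t * x + b) := by
    rw [← Finset.sum_fiberwise univ (Algebra.trace Fq Fqn)
        (fun x => CurveAux.qc Fqn (a * x * algebraMap Fq Fqn (Algebra.trace Fq Fqn x) + b))]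
    apply Finset.sum_congr rfl; intro t _
    apply Finset.sum_congr rfl; intro x hx
    have hxt : Algebra.trace Fq Fqn x = t := (Finset.mem_filter.mp hx).2
    rw [hxt]; congr 1; ring
  -- the t = 0 term
  have hT0 : ∑ x ∈ univ.filter (fun x : Fqn => Algebra.trace Fq Fqn x = (0 : Fq)),
      CurveAux.qc Fqn (a * algebraMap Fq Fqn (0 : Fq) * x + b)
      = (q : ℂ) ^ (n - 1) * CurveAux.qc Fqn b := by
    have hcardfib := CurveAux.card_trace_fiber (Fq := Fq) (Fqn := Fqn) (0 : Fq)
    rw [hcard, hcardn] at hcardfib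
    have hcf : (univ.filter (fun x : Fqn => Algebra.trace Fq Fqn x = (0 : Fq))).card
        = q ^ (n - 1) := by
      have hpow : q ^ n = q ^ (n - 1) * q := by
        rw [← pow_succ]; congr 1; omega
      rw [hpow] at hcardfib
      exact Nat.eq_of_mul_eq_mul_right (by omega) hcardfib
    have hzero : ∀ x : Fqn, a * algebraMap Fq Fqn (0 : Fq) * x + b = b := by
      intro x; rw [map_zero, mul_zero, zero_mul, zero_add]
    rw [Finset.sum_congr rfl (fun x _ => by rw [hzero x]), Finset.sum_const, hcf, nsmul_eq_mul]
    push_cast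
    ring
  -- the t ≠ 0 terms
  have hTt : ∀ t : Fq, t ≠ 0 →
      (q : ℂ) * ∑ x ∈ univ.filter (fun x : Fqn => Algebra.trace Fq Fqn x = t),
        CurveAux.qc Fqn (a * algebraMap Fq Fqn t * x + b)
      = gaussSum (CurveAux.qc Fqn) (ψ.compAddMonoidHom (Algebra.trace Fq Fqn).toAddMonoidHom)
          * gaussSum (CurveAux.qc Fq) ψ * CurveAux.qc Fqn a * CurveAux.qc Fq (-1) := by
    intro t ht
    have ht'0 : algebraMap Fq Fqn t ≠ 0 :=
      fun h => ht ((algebraMap Fq Fqn).injective (by rw [h, map_zero]))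
    have hc : a * algebraMap Fq Fqn t ≠ 0 := mul_ne_zero ha ht'0
    have htrb : Algebra.trace Fq Fqn (b * (a * algebraMap Fq Fqn t)⁻¹) = 0 := by
      have hbc : b * (a * algebraMap Fq Fqn t)⁻¹ = t⁻¹ • (b / a) := by
        rw [Algebra.smul_def, map_inv₀, mul_inv, div_eq_mul_inv]
        ring
      rw [hbc, map_smul, hB, smul_zero]
    have horth : ∀ x : Fqn, (∑ l : Fq, ψ (l * (Algebra.trace Fq Fqn x - t)))
        = if Algebra.trace Fq Fqn x = t then (q : ℂ) else 0 := by
      intro x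
      rw [CurveAux.sum_mulShift_eq hψ, hcard]
      by_cases h : Algebra.trace Fq Fqn x = t
      · rw [if_pos (by rw [h, sub_self]), if_pos h]
      · rw [if_neg (fun hh => h (by rwa [sub_eq_zero] at hh)), if_neg h]
    have e1 : ∑ x : Fqn, CurveAux.qc Fqn (a * algebraMap Fq Fqn t * x + b)
          * (∑ l : Fq, ψ (l * (Algebra.trace Fq Fqn x - t)))
        = (q : ℂ) * ∑ x ∈ univ.filter (fun x : Fqn => Algebra.trace Fq Fqn x = t),
            CurveAux.qc Fqn (a * algebraMap Fq Fqn t * x + b) := by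
      rw [Finset.sum_congr rfl (fun x _ => by rw [horth x]), Finset.mul_sum, Finset.sum_filter]
      apply Finset.sum_congr rfl; intro x _
      by_cases h : Algebra.trace Fq Fqn x = t
      · rw [if_pos h, if_pos h]; ring
      · rw [if_neg h, if_neg h]; ring
    have e2 : ∑ x : Fqn, CurveAux.qc Fqn (a * algebraMap Fq Fqn t * x + b)
          * (∑ l : Fq, ψ (l * (Algebra.trace Fq Fqn x - t)))
        = ∑ l : Fq, (∑ x : Fqn, CurveAux.qc Fqn (a * algebraMap Fq Fqn t * x + b)
            * ψ (l * Algebra.trace Fq Fqn x)) * ψ (-(l * t)) := by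
      simp_rw [Finset.mul_sum]
      rw [Finset.sum_comm]
      apply Finset.sum_congr rfl; intro l _
      rw [Finset.sum_mul]
      apply Finset.sum_congr rfl; intro x _
      have hsplit : ψ (l * (Algebra.trace Fq Fqn x - t))
          = ψ (l * Algebra.trace Fq Fqn x) * ψ (-(l * t)) := by
        rw [← AddChar.map_add_eq_mul]; congr 1; ring
      rw [hsplit]; ring
    have key : ∀ l : Fq, ∑ x : Fqn, CurveAux.qc Fqn (a * algebraMap Fq Fqn t * x + b)
          * ψ (l * Algebra.trace Fq Fqn x)
        = CurveAux.qc Fqn (algebraMap Fq Fqn l * (a * algebraMap Fq Fqn t)⁻¹)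
            * gaussSum (CurveAux.qc Fqn)
              (ψ.compAddMonoidHom (Algebra.trace Fq Fqn).toAddMonoidHom) := by
      intro l
      have bij : ∑ x : Fqn, CurveAux.qc Fqn (a * algebraMap Fq Fqn t * x + b)
            * ψ (l * Algebra.trace Fq Fqn x)
          = ∑ u : Fqn, CurveAux.qc Fqn u
              * ψ (l * Algebra.trace Fq Fqn ((u - b) * (a * algebraMap Fq Fqn t)⁻¹)) := by
        rw [← Equiv.sum_comp ((Equiv.mulLeft₀ (a * algebraMap Fq Fqn t) hc).trans
            (Equiv.addRight b)) (fun u => CurveAux.qc Fqn u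
              * ψ (l * Algebra.trace Fq Fqn ((u - b) * (a * algebraMap Fq Fqn t)⁻¹)))]
        apply Finset.sum_congr rfl; intro x _
        have hφ : ((Equiv.mulLeft₀ (a * algebraMap Fq Fqn t) hc).trans (Equiv.addRight b)) x
            = a * algebraMap Fq Fqn t * x + b := rfl
        rw [hφ]
        have harg : (a * algebraMap Fq Fqn t * x + b - b) * (a * algebraMap Fq Fqn t)⁻¹ = x := by
          field_simp
          ring
        rw [harg]
      have htr : ∀ u : Fqn,
          ψ (l * Algebra.trace Fq Fqn ((u - b) * (a * algebraMap Fq Fqn t)⁻¹))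
          = (ψ.compAddMonoidHom (Algebra.trace Fq Fqn).toAddMonoidHom)
              (algebraMap Fq Fqn l * (a * algebraMap Fq Fqn t)⁻¹ * u) := by
        intro u
        show _ = ψ (Algebra.trace Fq Fqn (algebraMap Fq Fqn l * (a * algebraMap Fq Fqn t)⁻¹ * u))
        congr 1
        have h1 : (u - b) * (a * algebraMap Fq Fqn t)⁻¹
            = u * (a * algebraMap Fq Fqn t)⁻¹ - b * (a * algebraMap Fq Fqn t)⁻¹ := by ring
        rw [h1, map_sub, htrb, sub_zero]
        have h2 : algebraMap Fq Fqn l * (a * algebraMap Fq Fqn t)⁻¹ * u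
            = l • (u * (a * algebraMap Fq Fqn t)⁻¹) := by
          rw [Algebra.smul_def]; ring
        rw [h2, map_smul, smul_eq_mul]
      rw [bij, Finset.sum_congr rfl (fun u _ => by rw [htr u])]
      by_cases hl : l = 0
      · subst hl
        rw [map_zero, zero_mul]
        simp only [zero_mul, AddChar.map_zero_eq_one, mul_one]
        rw [CurveAux.qc_zero, zero_mul]
        exact MulChar.sum_eq_zero_of_ne_one (CurveAux.qc_ne_one hqn2)
      · have hd : algebraMap Fq Fqn l * (a * algebraMap Fq Fqn t)⁻¹ ≠ 0 :=
          mul_ne_zero (fun h => hl ((algebraMap Fq Fqn).injective (by rw [h, map_zero])))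
            (inv_ne_zero hc)
        exact CurveAux.gauss_shift _ hd
    -- assemble
    rw [← e1, e2, Finset.sum_congr rfl (fun l _ => by rw [key l])]
    have hstep : ∀ l : Fq,
        CurveAux.qc Fqn (algebraMap Fq Fqn l * (a * algebraMap Fq Fqn t)⁻¹)
          * gaussSum (CurveAux.qc Fqn)
            (ψ.compAddMonoidHom (Algebra.trace Fq Fqn).toAddMonoidHom) * ψ (-(l * t))
        = (CurveAux.qc Fqn ((a * algebraMap Fq Fqn t)⁻¹)
            * gaussSum (CurveAux.qc Fqn)
              (ψ.compAddMonoidHom (Algebra.trace Fq Fqn).toAddMonoidHom))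
          * (CurveAux.qc Fq l * ψ (-t * l)) := by
      intro l
      rw [map_mul, CurveAux.qc_algebraMap hq_odd hq1 hnodd hcard hcardn]
      have : -(l * t) = -t * l := by ring
      rw [this]
      ring
    rw [Finset.sum_congr rfl (fun l _ => hstep l), ← Finset.mul_sum,
      CurveAux.gauss_shift ψ (neg_ne_zero.mpr ht)]
    -- now pure character algebra
    have hval : CurveAux.qc Fqn ((a * algebraMap Fq Fqn t)⁻¹)
        = CurveAux.qc Fqn a * CurveAux.qc Fq t := by
      rw [mul_inv, map_mul, CurveAux.qc_inv, CurveAux.qc_inv,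
        CurveAux.qc_algebraMap hq_odd hq1 hnodd hcard hcardn]
    have hnegt : CurveAux.qc Fq (-t) = CurveAux.qc Fq (-1) * CurveAux.qc Fq t := by
      rw [show (-t : Fq) = (-1) * t from (neg_one_mul t).symm, map_mul]
    rw [hval, hnegt]
    have htt := CurveAux.qc_sq_eq_one (F := Fq) ht
    calc CurveAux.qc Fqn a * CurveAux.qc Fq t
          * gaussSum (CurveAux.qc Fqn) (ψ.compAddMonoidHom (Algebra.trace Fq Fqn).toAddMonoidHom)
          * (CurveAux.qc Fq (-1) * CurveAux.qc Fq t * gaussSum (CurveAux.qc Fq) ψ)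
        = (CurveAux.qc Fq t * CurveAux.qc Fq t)
            * (gaussSum (CurveAux.qc Fqn)
                (ψ.compAddMonoidHom (Algebra.trace Fq Fqn).toAddMonoidHom)
              * gaussSum (CurveAux.qc Fq) ψ * CurveAux.qc Fqn a * CurveAux.qc Fq (-1)) := by
          ring
      _ = gaussSum (CurveAux.qc Fqn) (ψ.compAddMonoidHom (Algebra.trace Fq Fqn).toAddMonoidHom)
            * gaussSum (CurveAux.qc Fq) ψ * CurveAux.qc Fqn a * CurveAux.qc Fq (-1) := by
          rw [htt, one_mul]
    -- split the sum over t
  obtain ⟨kk, hkk⟩ := id hnodd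
  have hqm2 : q % 2 = 1 := Nat.odd_iff.mp hq_odd
  have herase : ∑ t ∈ univ.erase (0 : Fq),
      ∑ x ∈ univ.filter (fun x : Fqn => Algebra.trace Fq Fqn x = t),
        CurveAux.qc Fqn (a * algebraMap Fq Fqn t * x + b)
      = ((q : ℂ) - 1) * (gaussSum (CurveAux.qc Fqn)
          (ψ.compAddMonoidHom (Algebra.trace Fq Fqn).toAddMonoidHom)
          * gaussSum (CurveAux.qc Fq) ψ * CurveAux.qc Fqn a * CurveAux.qc Fq (-1)) / q := by
    have hval : ∀ t ∈ univ.erase (0 : Fq),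
        ∑ x ∈ univ.filter (fun x : Fqn => Algebra.trace Fq Fqn x = t),
          CurveAux.qc Fqn (a * algebraMap Fq Fqn t * x + b)
        = (gaussSum (CurveAux.qc Fqn)
            (ψ.compAddMonoidHom (Algebra.trace Fq Fqn).toAddMonoidHom)
            * gaussSum (CurveAux.qc Fq) ψ * CurveAux.qc Fqn a * CurveAux.qc Fq (-1)) / q := by
      intro t ht'
      have ht : t ≠ 0 := (Finset.mem_erase.mp ht').1
      rw [eq_div_iff hq0, mul_comm]
      exact hTt t ht
    rw [Finset.sum_congr rfl hval, Finset.sum_const, Finset.card_erase_of_mem (Finset.mem_univ 0),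
      Finset.card_univ, hcard, nsmul_eq_mul, Nat.cast_sub (by omega : 1 ≤ q), Nat.cast_one]
    ring
  -- Gauss sum evaluation
  have hGg : gaussSum (CurveAux.qc Fqn) (ψ.compAddMonoidHom (Algebra.trace Fq Fqn).toAddMonoidHom)
      * gaussSum (CurveAux.qc Fq) ψ
      = (CurveAux.qc Fq (-1) * (q : ℂ)) ^ (kk + 1) := by
    rw [CurveAux.gauss_eq_pow hq_odd hq1 hnodd hcard hcardn hψ]
    have hg2 : gaussSum (CurveAux.qc Fq) ψ ^ 2 = CurveAux.qc Fq (-1) * (q : ℂ) := by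
      have h := gaussSum_sq (CurveAux.qc_ne_one hq2) CurveAux.qc_quadratic hψ
      rw [hcard] at h
      exact h
    calc gaussSum (CurveAux.qc Fq) ψ ^ n * gaussSum (CurveAux.qc Fq) ψ
        = (gaussSum (CurveAux.qc Fq) ψ ^ 2) ^ (kk + 1) := by
          rw [← pow_mul, ← pow_succ]; congr 1; omega
      _ = (CurveAux.qc Fq (-1) * (q : ℂ)) ^ (kk + 1) := by rw [hg2]
  have heps : CurveAux.qc Fq (-1) = if q % 4 = 1 then (1 : ℂ) else -1 := by
    rw [CurveAux.qc_apply, quadraticChar_neg_one hq2, hcard, ZMod.χ₄_nat_eq_if_mod_four,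
      if_neg (by omega : ¬q % 2 = 0)]
    split_ifs <;> norm_num
  have htauK : CurveAux.qc Fq (-1) ^ (kk + 1) = tauC p ^ ((n + 1) * s) := by
    rw [heps, hq, CurveAux.eps_pow_eq_tau p s (kk + 1) hp, ← pow_mul]
    congr 1
    have : n + 1 = 2 * (kk + 1) := by omega
    rw [this]
    ring
  have hneg_a : CurveAux.qc Fqn (-a) = CurveAux.qc Fq (-1) * CurveAux.qc Fqn a := by
    rw [show (-a : Fqn) = (-1) * a from (neg_one_mul a).symm, map_mul]
    congr 1
    rw [show ((-1 : Fqn)) = algebraMap Fq Fqn (-1) by rw [map_neg, map_one],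
      CurveAux.qc_algebraMap hq_odd hq1 hnodd hcard hcardn]
  have hdiv : (n - 1) / 2 = kk := by omega
  have hthird : ((q : ℂ) - 1) * (gaussSum (CurveAux.qc Fqn)
        (ψ.compAddMonoidHom (Algebra.trace Fq Fqn).toAddMonoidHom)
        * gaussSum (CurveAux.qc Fq) ψ * CurveAux.qc Fqn a * CurveAux.qc Fq (-1)) / q
      = tauC p ^ ((n + 1) * s) * CurveAux.qc Fqn (-a) * ((q : ℂ) - 1)
          * (q : ℂ) ^ ((n - 1) / 2) := by
    rw [hGg, mul_pow, hneg_a, ← htauK, hdiv]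
    field_simp
    ring
  rw [hN, hfib, ← Finset.add_sum_erase univ _ (Finset.mem_univ (0 : Fq)), hT0, herase, hthird]
  ring
end

section
/- Let q = p^s with p an odd prime and n an odd positive integer. The number of elements α ∈ F_{q^n} such that both α and Tr(α) are squares in F_{q^n} (including 0) equals (q^n + q^{n−1} + τ^{s(n−1)}·(q−1)·q^{(n−1)/2} + 2)/4, where τ = 1 if p ≡ 1 (mod 4) and τ = i if p ≡ 3 (mod 4). -/
set_option linter.unusedSectionVars false
set_option maxHeartbeats 1000000

open Finset

section Counting

variable {F : Type*} [Field F] [Fintype F] [DecidableEq F]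

private lemma sum_fiber {α : Type*} [Fintype α] (g : α → F) (f : F → ℤ) :
    ∑ a : α, f (g a) = ∑ t : F, ((univ.filter fun a => g a = t).card : ℤ) * f t := by
  rw [← Fintype.sum_fiberwise g (fun a => f (g a))]
  refine Finset.sum_congr rfl fun t _ => ?_
  have h1 : ∀ i : {a : α // g a = t}, f (g i) = f t := fun i => by rw [i.2]
  rw [Fintype.sum_congr _ _ h1, Finset.sum_const, Finset.card_univ, Fintype.card_subtype,
    nsmul_eq_mul]

private lemma card_sqrt_eq (hF : ringChar F ≠ 2) (a : F) :
    ((univ.filter fun x : F => x ^ 2 = a).card : ℤ) = quadraticChar F a + 1 := by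
  have := quadraticChar_card_sqrts hF a
  rw [← this]
  congr 1
  rw [Set.toFinset_setOf]

private lemma chi_inv (a : F) : quadraticChar F a⁻¹ = quadraticChar F a := by
  by_cases ha : a = 0
  · simp [ha]
  · have h1 : quadraticChar F a⁻¹ * quadraticChar F a = 1 := by
      rw [← map_mul, inv_mul_cancel₀ ha]; exact map_one _
    have h2 : quadraticChar F a * quadraticChar F a = 1 := by
      have := quadraticChar_sq_one (F := F) ha; rwa [pow_two] at this
    calc quadraticChar F a⁻¹ = quadraticChar F a⁻¹ * (quadraticChar F a * quadraticChar F a) := by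
          rw [h2, mul_one]
      _ = (quadraticChar F a⁻¹ * quadraticChar F a) * quadraticChar F a := by ring
      _ = quadraticChar F a := by rw [h1, one_mul]

private lemma card_sqrt_w (hF : ringChar F ≠ 2) {w : F} (hw : w ≠ 0) (t : F) :
    ((univ.filter fun x : F => w * x ^ 2 = t).card : ℤ)
      = quadraticChar F (w⁻¹ * t) + 1 := by
  rw [← card_sqrt_eq hF]
  congr 2
  ext x
  simp only [mem_filter, mem_univ, true_and]
  constructor
  · intro h; rw [← h]; field_simp
  · intro h; rw [h]; field_simp

private lemma sum_chi_shift (c : F) (hF : ringChar F ≠ 2) :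
    ∑ t : F, quadraticChar F (c - t) = 0 := by
  rw [← quadraticChar_sum_zero hF]
  exact Fintype.sum_equiv (Equiv.subLeft c) _ _ (fun t => rfl)

private lemma sum_chi_mul_chi (hF : ringChar F ≠ 2) (c : F) :
    ∑ t : F, quadraticChar F t * quadraticChar F (c - t)
      = if c = 0 then (quadraticChar F (-1)) * ((Fintype.card F : ℤ) - 1)
        else -quadraticChar F (-1) := by
  by_cases hc : c = 0
  · subst hc
    simp only [if_pos rfl, zero_sub]
    have h1 : ∀ t : F, quadraticChar F t * quadraticChar F (-t)
        = quadraticChar F (-1) * (if t = 0 then 0 else 1) := by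
      intro t
      by_cases ht : t = 0
      · simp [ht]
      · have : (-t) = (-1) * t := by ring
        rw [this, map_mul, if_neg ht, mul_one]
        have h2 : quadraticChar F t * quadraticChar F t = 1 := by
          have := quadraticChar_sq_one (F := F) ht; rwa [pow_two] at this
        calc quadraticChar F t * (quadraticChar F (-1) * quadraticChar F t)
            = quadraticChar F (-1) * (quadraticChar F t * quadraticChar F t) := by ring
          _ = quadraticChar F (-1) := by rw [h2, mul_one]
    rw [Finset.sum_congr rfl fun t _ => h1 t, ← Finset.mul_sum]
    congr 1
    have h4 : (∑ i : F, if i = 0 then (0:ℤ) else 1)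
        = ∑ i : F, ((1:ℤ) - if i = 0 then 1 else 0) :=
      Finset.sum_congr rfl (fun i _ => by split <;> ring)
    rw [h4, Finset.sum_sub_distrib, Finset.sum_const,
      Finset.sum_ite_eq' univ (0 : F) (fun _ => (1:ℤ))]
    simp [Finset.card_univ]
  · rw [if_neg hc]
    -- drop the t = 0 term
    have h0 : ∑ t : F, quadraticChar F t * quadraticChar F (c - t)
        = ∑ t ∈ univ.erase (0 : F), quadraticChar F t * quadraticChar F (c - t) := by
      rw [Finset.sum_erase]; simp
    rw [h0]
    have key : ∑ t ∈ univ.erase (0 : F), quadraticChar F t * quadraticChar F (c - t)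
        = ∑ u ∈ univ.erase (-1 : F), quadraticChar F u := by
      refine Finset.sum_nbij' (fun t => c * t⁻¹ - 1) (fun u => c * (u + 1)⁻¹) ?_ ?_ ?_ ?_ ?_
      · intro t ht
        simp only [mem_erase, mem_univ, and_true] at ht ⊢
        intro h
        apply hc
        have : c * t⁻¹ = 0 := by linear_combination h
        rcases mul_eq_zero.1 this with h' | h'
        · exact h'
        · exact absurd (inv_eq_zero.1 h') ht
      · intro u hu
        simp only [mem_erase, mem_univ, and_true] at hu ⊢
        intro h
        rcases mul_eq_zero.1 h with h' | h'
        · exact hc h'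
        · exact hu (by linear_combination (inv_eq_zero.1 h'))
      · intro t ht
        simp only [mem_erase, mem_univ, and_true] at ht
        field_simp
        rw [sub_add_cancel, div_self hc]
      · intro u hu
        simp only [mem_erase, mem_univ, and_true] at hu
        have h1 : u + 1 ≠ 0 := fun h => hu (by linear_combination h)
        field_simp
        ring
      · intro t ht
        simp only [mem_erase, mem_univ, and_true] at ht
        have h5 : c * t⁻¹ - 1 = t⁻¹ * (c - t) := by field_simp
        show _ = quadraticChar F (c * t⁻¹ - 1)
        rw [h5, map_mul, chi_inv]
    rw [key]
    have := quadraticChar_sum_zero (F := F) hF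
    have h2 : ∑ u ∈ univ.erase (-1 : F), quadraticChar F u
        = (∑ u : F, quadraticChar F u) - quadraticChar F (-1) := by
      rw [← Finset.add_sum_erase univ _ (mem_univ (-1 : F))]; ring
    rw [h2, this, zero_sub]

private lemma card_filter_eq_sum {α : Type*} [Fintype α] (P : α → Prop) [DecidablePred P] :
    ((univ.filter P).card : ℤ) = ∑ a : α, if P a then (1:ℤ) else 0 := by
  rw [Finset.card_filter]
  push_cast
  rfl

private lemma card_two_var (hF : ringChar F ≠ 2) {a b : F} (ha : a ≠ 0) (hb : b ≠ 0) (c : F) :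
    ((univ.filter fun v : F × F => a * v.1 ^ 2 + b * v.2 ^ 2 = c).card : ℤ)
      = (Fintype.card F : ℤ)
        + (if c = 0 then (Fintype.card F : ℤ) - 1 else -1) * quadraticChar F (-(a * b)) := by
  rw [card_filter_eq_sum, Fintype.sum_prod_type]
  have h1 : ∀ x : F, (∑ y : F, if a * x ^ 2 + b * y ^ 2 = c then (1:ℤ) else 0)
      = quadraticChar F (b⁻¹ * (c - a * x ^ 2)) + 1 := by
    intro x
    rw [← card_sqrt_w hF hb (c - a * x ^ 2), card_filter_eq_sum]
    refine Finset.sum_congr rfl fun y _ => if_congr ?_ rfl rfl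
    constructor
    · intro h; linear_combination h
    · intro h; linear_combination h
  rw [Finset.sum_congr rfl fun x _ => h1 x, Finset.sum_add_distrib, Finset.sum_const,
    Finset.card_univ, nsmul_eq_mul, mul_one]
  have h2 : ∑ x : F, quadraticChar F (b⁻¹ * (c - a * x ^ 2))
      = ∑ t : F, ((univ.filter fun x : F => a * x ^ 2 = t).card : ℤ)
          * quadraticChar F (b⁻¹ * (c - t)) :=
    sum_fiber (fun x : F => a * x ^ 2) (fun t => quadraticChar F (b⁻¹ * (c - t)))
  rw [h2]
  have h3 : ∀ t : F, ((univ.filter fun x : F => a * x ^ 2 = t).card : ℤ)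
        * quadraticChar F (b⁻¹ * (c - t))
      = quadraticChar F a⁻¹ * quadraticChar F b⁻¹
          * (quadraticChar F t * quadraticChar F (c - t))
        + quadraticChar F b⁻¹ * quadraticChar F (c - t) := by
    intro t
    rw [card_sqrt_w hF ha, map_mul, map_mul]
    ring
  rw [Finset.sum_congr rfl fun t _ => h3 t, Finset.sum_add_distrib, ← Finset.mul_sum,
    ← Finset.mul_sum, sum_chi_shift c hF, sum_chi_mul_chi hF c, mul_zero, add_zero]
  have hx : quadraticChar F a⁻¹ * quadraticChar F b⁻¹ * quadraticChar F (-1)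
      = quadraticChar F (-(a * b)) := by
    rw [chi_inv a, chi_inv b, ← map_mul, ← map_mul]
    congr 1
    ring
  by_cases hc : c = 0
  · rw [if_pos hc, if_pos hc]
    linear_combination ((Fintype.card F : ℤ) - 1) * hx
  · rw [if_neg hc, if_neg hc]
    linear_combination (-1 : ℤ) * hx

private lemma card_filter_cons {k : ℕ} (P : (Fin (k + 1) → F) → Prop) [DecidablePred P] :
    ((univ.filter P).card : ℤ)
      = ∑ a : F, ((univ.filter fun y : Fin k → F => P (Fin.cons a y)).card : ℤ) := by
  have h1 : ∑ x : Fin (k + 1) → F, (if P x then (1:ℤ) else 0)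
      = ∑ v : F × (Fin k → F), (if P (Fin.cons v.1 v.2) then (1:ℤ) else 0) :=
    (Fintype.sum_equiv (Fin.consEquiv (fun _ => F)) _ _ (fun v => rfl)).symm
  rw [card_filter_eq_sum, h1, Fintype.sum_prod_type]
  exact Finset.sum_congr rfl fun a _ => (card_filter_eq_sum _).symm

private lemma sum_v_shift (c : F) :
    ∑ t : F, (if c - t = 0 then (Fintype.card F : ℤ) - 1 else -1) = 0 := by
  have h : ∀ t : F, (if c - t = 0 then (Fintype.card F : ℤ) - 1 else -1)
      = (Fintype.card F : ℤ) * (if t = c then 1 else 0) - 1 := by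
    intro t
    by_cases h : t = c
    · rw [if_pos (by rw [h, sub_self]), if_pos h]; ring
    · rw [if_neg (fun hh => h (by linear_combination -hh)), if_neg h]; ring
  rw [Finset.sum_congr rfl fun t _ => h t, Finset.sum_sub_distrib, ← Finset.mul_sum,
    Finset.sum_ite_eq' univ c (fun _ => (1:ℤ)), if_pos (mem_univ c), Finset.sum_const,
    Finset.card_univ, nsmul_eq_mul]
  ring

private lemma sum_vv (c : F) :
    ∑ t : F, (if t = 0 then (Fintype.card F : ℤ) - 1 else -1)
        * (if c - t = 0 then (Fintype.card F : ℤ) - 1 else -1)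
      = (Fintype.card F : ℤ) * (if c = 0 then (Fintype.card F : ℤ) - 1 else -1) := by
  by_cases hc : c = 0
  · subst hc
    have h : ∀ t : F, (if t = 0 then (Fintype.card F : ℤ) - 1 else -1)
          * (if 0 - t = 0 then (Fintype.card F : ℤ) - 1 else -1)
        = 1 + ((Fintype.card F : ℤ) ^ 2 - 2 * Fintype.card F) * (if t = 0 then 1 else 0) := by
      intro t
      by_cases h : t = 0
      · rw [if_pos h, if_pos (by rw [h, sub_zero]), if_pos h]; ring
      · rw [if_neg h, if_neg (fun hh => h (by linear_combination -hh)), if_neg h]; ring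
    rw [Finset.sum_congr rfl fun t _ => h t, Finset.sum_add_distrib, Finset.sum_const,
      Finset.card_univ, ← Finset.mul_sum, Finset.sum_ite_eq' univ (0 : F) (fun _ => (1:ℤ)),
      if_pos (mem_univ (0 : F)), nsmul_eq_mul, if_pos rfl]
    ring
  · have h : ∀ t : F, (if t = 0 then (Fintype.card F : ℤ) - 1 else -1)
          * (if c - t = 0 then (Fintype.card F : ℤ) - 1 else -1)
        = 1 - (Fintype.card F : ℤ) * (if t = 0 then 1 else 0)
            - (Fintype.card F : ℤ) * (if t = c then 1 else 0) := by
      intro t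
      by_cases h0 : t = 0
      · have hne : ¬(c - t = 0) := fun hh => hc (by rw [h0] at hh; linear_combination hh)
        rw [if_pos h0, if_neg hne, if_pos h0, if_neg (fun hh => hc (by rw [← hh, h0]))]
        ring
      · by_cases h1 : t = c
        · rw [if_neg h0, if_pos (by rw [h1, sub_self]), if_neg h0, if_pos h1]; ring
        · rw [if_neg h0, if_neg (fun hh => h1 (by linear_combination -hh)), if_neg h0,
            if_neg h1]
          ring
    rw [Finset.sum_congr rfl fun t _ => h t, Finset.sum_sub_distrib, Finset.sum_sub_distrib,
      Finset.sum_const, Finset.card_univ, ← Finset.mul_sum, ← Finset.mul_sum,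
      Finset.sum_ite_eq' univ (0 : F) (fun _ => (1:ℤ)), if_pos (mem_univ (0 : F)),
      Finset.sum_ite_eq' univ c (fun _ => (1:ℤ)), if_pos (mem_univ c), nsmul_eq_mul,
      if_neg hc]
    ring

private lemma diag_count (hF : ringChar F ≠ 2) :
    ∀ (m k : ℕ), k = 2 * m + 2 → ∀ (w : Fin k → F), (∀ i, w i ≠ 0) → ∀ c : F,
    ((univ.filter fun x : Fin k → F => ∑ i, w i * x i ^ 2 = c).card : ℤ)
      = (Fintype.card F : ℤ) ^ (2 * m + 1)
        + (if c = 0 then (Fintype.card F : ℤ) - 1 else -1) * (Fintype.card F : ℤ) ^ m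
          * quadraticChar F ((-1) ^ (m + 1) * ∏ i, w i) := by
  intro m
  induction m with
  | zero =>
    intro k hk w hw c
    have hk2 : k = 1 + 1 := by omega
    subst hk2
    have he : ((univ.filter fun x : Fin (1 + 1) → F => ∑ i, w i * x i ^ 2 = c).card : ℤ)
        = ((univ.filter fun v : F × F => w 0 * v.1 ^ 2 + w 1 * v.2 ^ 2 = c).card : ℤ) := by
      rw [card_filter_eq_sum, card_filter_eq_sum]
      refine (Fintype.sum_equiv (piFinTwoEquiv (fun _ : Fin (1 + 1) => F)) _ _ fun x => ?_)
      exact if_congr (by rw [Fin.sum_univ_two]; exact Iff.rfl) rfl rfl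
    have h2 : ((-1 : F)) ^ (0 + 1) * ∏ i, w i = -(w 0 * w 1) := by
      rw [Fin.prod_univ_two]; ring
    rw [he, card_two_var hF (hw 0) (hw 1) c, ← h2]
    norm_num
  | succ m ih =>
    intro k hk w hw c
    have hk2 : k = (2 * m + 2) + 1 + 1 := by omega
    subst hk2
    have w1 : Fin ((2 * m + 2) + 1 + 1) := (0 : Fin ((2 * m + 2) + 1)).succ
    rw [card_filter_cons]
    have step2 : ∀ a : F,
        ((univ.filter fun y : Fin ((2 * m + 2) + 1) → F =>
            (fun x : Fin ((2 * m + 2) + 1 + 1) → F => ∑ i, w i * x i ^ 2 = c)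
              (Fin.cons a y)).card : ℤ)
        = ∑ b : F, ((univ.filter fun z : Fin (2 * m + 2) → F =>
            (fun y : Fin ((2 * m + 2) + 1) → F =>
              (fun x : Fin ((2 * m + 2) + 1 + 1) → F => ∑ i, w i * x i ^ 2 = c)
                (Fin.cons a y)) (Fin.cons b z)).card : ℤ) :=
      fun a => card_filter_cons _
    rw [Finset.sum_congr rfl fun a _ => step2 a]
    have key : ∀ a b : F,
        ((univ.filter fun z : Fin (2 * m + 2) → F =>
            (fun y : Fin ((2 * m + 2) + 1) → F =>
              (fun x : Fin ((2 * m + 2) + 1 + 1) → F => ∑ i, w i * x i ^ 2 = c)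
                (Fin.cons a y)) (Fin.cons b z)).card : ℤ)
        = (Fintype.card F : ℤ) ^ (2 * m + 1)
          + (if c - (w 0 * a ^ 2 + w (0 : Fin ((2 * m + 2) + 1)).succ * b ^ 2) = 0
              then (Fintype.card F : ℤ) - 1 else -1) * (Fintype.card F : ℤ) ^ m
            * quadraticChar F ((-1) ^ (m + 1)
                * ∏ i : Fin (2 * m + 2), w i.succ.succ) := by
      intro a b
      have hsum : ∀ z : Fin (2 * m + 2) → F,
          (∑ i, w i * (Fin.cons a (Fin.cons b z) : Fin ((2 * m + 2) + 1 + 1) → F) i ^ 2)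
          = w 0 * a ^ 2 + w (0 : Fin ((2 * m + 2) + 1)).succ * b ^ 2
            + ∑ i : Fin (2 * m + 2), w i.succ.succ * z i ^ 2 := by
        intro z
        rw [Fin.sum_univ_succ, Fin.cons_zero, Fin.sum_univ_succ]
        simp only [Fin.cons_succ, Fin.cons_zero]
        ring
      have hfilter : (univ.filter fun z : Fin (2 * m + 2) → F =>
            (fun y : Fin ((2 * m + 2) + 1) → F =>
              (fun x : Fin ((2 * m + 2) + 1 + 1) → F => ∑ i, w i * x i ^ 2 = c)
                (Fin.cons a y)) (Fin.cons b z))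
          = (univ.filter fun z : Fin (2 * m + 2) → F =>
              ∑ i, (fun j : Fin (2 * m + 2) => w j.succ.succ) i * z i ^ 2
                = c - w 0 * a ^ 2 - w (0 : Fin ((2 * m + 2) + 1)).succ * b ^ 2) := by
        refine Finset.filter_congr fun z _ => ?_
        show (∑ i, w i * (Fin.cons a (Fin.cons b z) : Fin ((2 * m + 2) + 1 + 1) → F) i ^ 2 = c)
          ↔ _
        rw [hsum z]
        constructor
        · intro h; linear_combination h
        · intro h; linear_combination h
      rw [hfilter, ih (2 * m + 2) rfl _ (fun i => hw _) _]
      have hiff : (c - w 0 * a ^ 2 - w (0 : Fin ((2 * m + 2) + 1)).succ * b ^ 2 = 0)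
          ↔ (c - (w 0 * a ^ 2 + w (0 : Fin ((2 * m + 2) + 1)).succ * b ^ 2) = 0) := by
        constructor
        · intro h; linear_combination h
        · intro h; linear_combination h
      rw [if_congr hiff rfl rfl]
    rw [Finset.sum_congr rfl fun a _ => Finset.sum_congr rfl fun b _ => key a b]
    -- Now compute the double sum
    have hsplit : ∀ a : F, (∑ b : F, ((Fintype.card F : ℤ) ^ (2 * m + 1)
          + (if c - (w 0 * a ^ 2 + w (0 : Fin ((2 * m + 2) + 1)).succ * b ^ 2) = 0
              then (Fintype.card F : ℤ) - 1 else -1) * (Fintype.card F : ℤ) ^ m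
            * quadraticChar F ((-1) ^ (m + 1) * ∏ i : Fin (2 * m + 2), w i.succ.succ)))
        = (Fintype.card F : ℤ) * (Fintype.card F : ℤ) ^ (2 * m + 1)
          + (Fintype.card F : ℤ) ^ m
            * quadraticChar F ((-1) ^ (m + 1) * ∏ i : Fin (2 * m + 2), w i.succ.succ)
            * ∑ b : F, (if c - (w 0 * a ^ 2 + w (0 : Fin ((2 * m + 2) + 1)).succ * b ^ 2) = 0
                then (Fintype.card F : ℤ) - 1 else -1) := by
      intro a
      rw [Finset.sum_add_distrib, Finset.sum_const, Finset.card_univ, nsmul_eq_mul]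
      congr 1
      rw [Finset.mul_sum]
      refine Finset.sum_congr rfl fun b _ => by ring
    rw [Finset.sum_congr rfl fun a _ => hsplit a, Finset.sum_add_distrib, Finset.sum_const,
      Finset.card_univ, nsmul_eq_mul, ← Finset.mul_sum]
    -- double sum of the v-term over a, b equals sum over F × F
    have hprod2 : (∑ a : F, ∑ b : F,
          (if c - (w 0 * a ^ 2 + w (0 : Fin ((2 * m + 2) + 1)).succ * b ^ 2) = 0
              then (Fintype.card F : ℤ) - 1 else -1))
        = ∑ v : F × F,
            (if c - (w 0 * v.1 ^ 2 + w (0 : Fin ((2 * m + 2) + 1)).succ * v.2 ^ 2) = 0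
              then (Fintype.card F : ℤ) - 1 else -1) := by
      rw [Fintype.sum_prod_type]
    rw [hprod2]
    have hfib : (∑ v : F × F,
          (if c - (w 0 * v.1 ^ 2 + w (0 : Fin ((2 * m + 2) + 1)).succ * v.2 ^ 2) = 0
            then (Fintype.card F : ℤ) - 1 else -1))
        = ∑ t : F, ((univ.filter fun v : F × F =>
              w 0 * v.1 ^ 2 + w (0 : Fin ((2 * m + 2) + 1)).succ * v.2 ^ 2 = t).card : ℤ)
            * (if c - t = 0 then (Fintype.card F : ℤ) - 1 else -1) :=
      sum_fiber (fun v : F × F => w 0 * v.1 ^ 2 + w (0 : Fin ((2 * m + 2) + 1)).succ * v.2 ^ 2)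
        (fun t => if c - t = 0 then (Fintype.card F : ℤ) - 1 else -1)
    rw [hfib]
    have hcv : ∀ t : F, ((univ.filter fun v : F × F =>
            w 0 * v.1 ^ 2 + w (0 : Fin ((2 * m + 2) + 1)).succ * v.2 ^ 2 = t).card : ℤ)
          * (if c - t = 0 then (Fintype.card F : ℤ) - 1 else -1)
        = (Fintype.card F : ℤ) * (if c - t = 0 then (Fintype.card F : ℤ) - 1 else -1)
          + quadraticChar F (-(w 0 * w (0 : Fin ((2 * m + 2) + 1)).succ))
            * ((if t = 0 then (Fintype.card F : ℤ) - 1 else -1)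
              * (if c - t = 0 then (Fintype.card F : ℤ) - 1 else -1)) := by
      intro t
      rw [card_two_var hF (hw 0) (hw _) t]
      ring
    rw [Finset.sum_congr rfl fun t _ => hcv t, Finset.sum_add_distrib, ← Finset.mul_sum,
      ← Finset.mul_sum, sum_v_shift c, sum_vv c, mul_zero, zero_add]
    -- final algebra
    have hXY : quadraticChar F ((-1) ^ (m + 1) * ∏ i : Fin (2 * m + 2), w i.succ.succ)
          * quadraticChar F (-(w 0 * w (0 : Fin ((2 * m + 2) + 1)).succ))
        = quadraticChar F ((-1) ^ (m + 1 + 1) * ∏ i, w i) := by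
      rw [← map_mul]
      congr 1
      have hp : (∏ i : Fin (2 * m + 2 + 1 + 1), w i)
          = w 0 * (w (Fin.succ 0) * ∏ i : Fin (2 * m + 2), w i.succ.succ) := by
        conv_lhs => rw [Fin.prod_univ_succ, Fin.prod_univ_succ]
      rw [hp]
      ring
    have hpow : (Fintype.card F : ℤ) * (Fintype.card F : ℤ) ^ (2 * m + 1)
          * (Fintype.card F : ℤ) = (Fintype.card F : ℤ) ^ (2 * (m + 1) + 1) := by
      have : 2 * (m + 1) + 1 = (2 * m + 1) + 2 := by ring
      rw [this, pow_add]
      ring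
    calc (Fintype.card F : ℤ) * ((Fintype.card F : ℤ) * (Fintype.card F : ℤ) ^ (2 * m + 1))
          + (Fintype.card F : ℤ) ^ m
            * quadraticChar F ((-1) ^ (m + 1) * ∏ i : Fin (2 * m + 2), w i.succ.succ)
            * (quadraticChar F (-(w 0 * w (0 : Fin ((2 * m + 2) + 1)).succ))
              * ((Fintype.card F : ℤ)
                * (if c = 0 then (Fintype.card F : ℤ) - 1 else -1)))
        = (Fintype.card F : ℤ) ^ (2 * (m + 1) + 1)
          + (if c = 0 then (Fintype.card F : ℤ) - 1 else -1) * (Fintype.card F : ℤ) ^ (m + 1)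
            * (quadraticChar F ((-1) ^ (m + 1) * ∏ i : Fin (2 * m + 2), w i.succ.succ)
              * quadraticChar F (-(w 0 * w (0 : Fin ((2 * m + 2) + 1)).succ))) := by
          rw [← hpow, pow_add]
          ring
      _ = (Fintype.card F : ℤ) ^ (2 * (m + 1) + 1)
          + (if c = 0 then (Fintype.card F : ℤ) - 1 else -1) * (Fintype.card F : ℤ) ^ (m + 1)
            * quadraticChar F ((-1) ^ (m + 1 + 1) * ∏ i, w i) := by
          rw [hXY]

end Counting

section FieldFacts

private lemma ring_char_eq {p s q : ℕ} [hp : Fact p.Prime] (hs : 0 < s) (hq : q = p ^ s)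
    {F : Type*} [Field F] [Fintype F] (hcard : Fintype.card F = q) : ringChar F = p := by
  haveI := ringChar.charP F
  obtain ⟨m, hm_prime, hcards⟩ := FiniteField.card F (ringChar F)
  have hdvd : p ∣ ringChar F ^ (m : ℕ) := by
    rw [← hcards, hcard, hq]
    exact dvd_pow_self p hs.ne'
  exact ((Nat.prime_dvd_prime_iff_eq hp.out hm_prime).mp (hp.out.dvd_of_dvd_pow hdvd)).symm

private lemma fixed_in_base {F E : Type*} [Field F] [Fintype F] [Field E] [Algebra F E]
    {x : E} (hx : x ^ (Fintype.card F) = x) : ∃ a : F, algebraMap F E a = x := by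
  by_contra hcon
  push_neg at hcon
  classical
  set g : Polynomial E := Polynomial.X ^ (Fintype.card F) - Polynomial.X with hg
  have hq2 : 1 < Fintype.card F := Fintype.one_lt_card
  have hgdeg : g.natDegree = Fintype.card F := by
    rw [hg, Polynomial.natDegree_sub_eq_left_of_natDegree_lt] <;>
      rw [Polynomial.natDegree_X_pow] <;> first
        | rfl
        | (rw [Polynomial.natDegree_X]; omega)
  have hg0 : g ≠ 0 := fun h => by rw [h, Polynomial.natDegree_zero] at hgdeg; omega
  have hroots : (insert x (univ.image (algebraMap F E))) ⊆ g.roots.toFinset := by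
    intro y hy
    rw [Multiset.mem_toFinset, Polynomial.mem_roots']
    refine ⟨hg0, ?_⟩
    have heval : Polynomial.IsRoot g y ↔ y ^ (Fintype.card F) - y = 0 := by
      rw [hg]
      simp [Polynomial.IsRoot, Polynomial.eval_sub, Polynomial.eval_pow, Polynomial.eval_X]
    rw [heval]
    rcases Finset.mem_insert.1 hy with rfl | hy'
    · rw [hx]; ring
    · obtain ⟨a, _, rfl⟩ := Finset.mem_image.1 hy'
      rw [← map_pow, FiniteField.pow_card]
      ring
  have hcard1 : (insert x (univ.image (algebraMap F E))).card = Fintype.card F + 1 := by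
    rw [Finset.card_insert_of_notMem fun hmem => ?_,
      Finset.card_image_of_injective _ (algebraMap F E).injective, Finset.card_univ]
    obtain ⟨a, _, ha⟩ := Finset.mem_image.1 hmem
    exact hcon a ha
  have hle := Finset.card_le_card hroots
  have h2 := Multiset.toFinset_card_le g.roots
  have h3 := g.card_roots'
  omega

private lemma square_bridge {p s n q : ℕ} [Fact p.Prime] (hp : Odd p) (hs : 0 < s)
    (hn : 0 < n) (hnodd : Odd n) (hq : q = p ^ s) {Fq Fqn : Type*} [Field Fq] [Field Fqn]
    [Fintype Fq] [Fintype Fqn] [Algebra Fq Fqn] (hcard : Fintype.card Fq = q)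
    (hcardn : Fintype.card Fqn = q ^ n) (t : Fq) :
    (∃ y : Fqn, y ^ 2 = algebraMap Fq Fqn t) ↔ IsSquare t := by
  have hrc : ringChar Fq = p := ring_char_eq hs hq hcard
  have hrcn : ringChar Fqn = p :=
    ring_char_eq (Nat.mul_pos hs hn) (by rw [hq, ← pow_mul]) hcardn
  have hp2 : p ≠ 2 := by rcases hp with ⟨k, hk⟩; omega
  have hF : ringChar Fq ≠ 2 := by rw [hrc]; exact hp2
  have hFn : ringChar Fqn ≠ 2 := by rw [hrcn]; exact hp2
  have hqodd : Odd q := by rw [hq]; exact hp.pow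
  constructor
  · rintro ⟨y, hy⟩
    by_cases ht : t = 0
    · exact ⟨0, by rw [ht]; ring⟩
    by_contra hns
    have ht2 : t ^ (Fintype.card Fq / 2) = -1 := by
      rcases FiniteField.pow_dichotomy hF ht with h | h
      · exact absurd ((FiniteField.isSquare_iff hF ht).mpr h) hns
      · exact h
    have hu0 : algebraMap Fq Fqn t ≠ 0 := fun h =>
      ht ((map_eq_zero_iff _ (algebraMap Fq Fqn).injective).mp h)
    have hsq : IsSquare (algebraMap Fq Fqn t) := ⟨y, by rw [← hy]; ring⟩
    have h1 : (algebraMap Fq Fqn t) ^ (Fintype.card Fqn / 2) = 1 :=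
      (FiniteField.isSquare_iff hFn hu0).mp hsq
    set M : ℕ := ∑ i ∈ Finset.range n, q ^ i with hM
    have hq1 : 1 ≤ q := by rw [hq]; exact Nat.one_le_pow _ _ (Fact.out (p := p.Prime)).pos
    have hqn1 : 1 ≤ q ^ n := Nat.one_le_pow _ _ (by omega)
    have hgeo : (q - 1) * M = q ^ n - 1 := by
      have hZ : ((q : ℤ) - 1) * (M : ℤ) = (q : ℤ) ^ n - 1 := by
        rw [hM]
        push_cast
        linear_combination geom_sum_mul (q : ℤ) n
      have : (((q - 1) * M : ℕ) : ℤ) = (((q ^ n - 1 : ℕ)) : ℤ) := by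
        push_cast [Nat.cast_sub hq1, Nat.cast_sub hqn1]
        linear_combination hZ
      exact_mod_cast this
    have hModd : Odd M := by
      rw [Nat.odd_iff, hM, Finset.sum_nat_mod,
        Finset.sum_congr rfl (fun i (_ : i ∈ Finset.range n) =>
          (Nat.odd_iff.mp (Odd.pow hqodd) : q ^ i % 2 = 1)),
        Finset.sum_const, Finset.card_range, smul_eq_mul, mul_one]
      exact Nat.odd_iff.mp hnodd
    have hhalf : Fintype.card Fqn / 2 = (Fintype.card Fq / 2) * M := by
      rw [hcard, hcardn]
      obtain ⟨b, hb⟩ := (Odd.pow hqodd : Odd (q ^ n))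
      obtain ⟨a, ha⟩ := hqodd
      have hq1' : q - 1 = 2 * a := by omega
      have h2 : 2 * (a * M) = 2 * b := by
        have h2b : (q - 1) * M = 2 * b := by rw [hgeo, hb]; omega
        calc 2 * (a * M) = (2 * a) * M := by ring
          _ = (q - 1) * M := by rw [hq1']
          _ = 2 * b := h2b
      have h3 : a * M = b := by omega
      have h4 : q / 2 = a := by omega
      have h5 : q ^ n / 2 = b := by omega
      rw [h4, h5, h3]
    rw [hhalf, pow_mul, ← map_pow, ht2] at h1
    have hm1 : ((algebraMap Fq Fqn) (-1 : Fq)) ^ M = -1 := by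
      rw [map_neg, map_one, Odd.neg_one_pow hModd]
    rw [hm1] at h1
    exact Ring.neg_one_ne_one_of_char_ne_two hFn h1
  · rintro ⟨r, rfl⟩
    exact ⟨algebraMap Fq Fqn r, by rw [← map_pow, sq]⟩

end FieldFacts

section Disc

private lemma det_traceMatrix_isSquare {p s nn q : ℕ} [Fact p.Prime] (hp : Odd p) (hs : 0 < s)
    (hq : q = p ^ s) {Fq Fqn : Type*} [Field Fq] [Field Fqn] [Fintype Fq] [Fintype Fqn]
    [Algebra Fq Fqn] (hcard : Fintype.card Fq = q) (hcardn : Fintype.card Fqn = q ^ nn)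
    (hnnodd : Odd nn) (hnn : Module.finrank Fq Fqn = nn) (b : Fin nn → Fqn) :
    IsSquare (Algebra.traceMatrix Fq b).det := by
  classical
  have hnn0 : 0 < nn := hnnodd.pos
  have hrcn : ringChar Fqn = p := ring_char_eq (Nat.mul_pos hs hnn0) (by rw [hq, ← pow_mul])
    hcardn
  haveI hchn : CharP Fqn p := hrcn ▸ ringChar.charP Fqn
  set E := AlgebraicClosure Fqn with hE
  haveI : CharP E p := charP_of_injective_algebraMap (algebraMap Fqn E).injective p
  have hcardE : Fintype.card (Fqn →ₐ[Fq] E) = nn := by rw [AlgHom.card]; exact hnn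
  obtain ⟨e⟩ : Nonempty (Fin nn ≃ (Fqn →ₐ[Fq] E)) :=
    ⟨Fintype.equivOfCardEq (by rw [hcardE, Fintype.card_fin])⟩
  set M := Algebra.embeddingsMatrixReindex Fq E b e with hM
  have key0 : (Algebra.traceMatrix Fq b).map (algebraMap Fq E) = M * M.transpose :=
    Algebra.traceMatrix_eq_embeddingsMatrixReindex_mul_trans Fq E b e
  have hdet : algebraMap Fq E (Algebra.traceMatrix Fq b).det = M.det * M.det := by
    have := congrArg Matrix.det key0
    rw [Matrix.det_mul, Matrix.det_transpose] at this
    rw [RingHom.map_det, RingHom.mapMatrix_apply]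
    exact this
  -- the Frobenius
  set φ : E →+* E := iterateFrobenius E p s with hφ
  have hφ_apply : ∀ x : E, φ x = x ^ q := fun x => by
    rw [hφ, iterateFrobenius_def, ← hq]
  have hMentry : ∀ i j, M i j = (e j) (b i) := fun i j => rfl
  -- Frobenius as an Fq-algebra endomorphism of E
  have hcommutes : ∀ a : Fq, φ (algebraMap Fq E a) = algebraMap Fq E a := by
    intro a
    rw [hφ_apply, ← map_pow]
    congr 1
    rw [← hcard]
    exact FiniteField.pow_card a
  set Φ : E →ₐ[Fq] E := AlgHom.mk' φ (fun c x => by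
    rw [Algebra.smul_def, Algebra.smul_def, map_mul, hcommutes]) with hΦ
  set π : (Fqn →ₐ[Fq] E) → (Fqn →ₐ[Fq] E) := fun σ => Φ.comp σ with hπdef
  have hπinj : Function.Injective π := by
    intro σ τ h
    ext x
    exact φ.injective (congrArg (fun f => f x) h)
  set π' : Equiv.Perm (Fqn →ₐ[Fq] E) :=
    Equiv.ofBijective π (Finite.injective_iff_bijective.mp hπinj) with hπ'
  have hπ'_apply : ∀ σ, π' σ = Φ.comp σ := fun σ => rfl
  set τ : Equiv.Perm (Fin nn) := e.symm.permCongr π' with hτ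
  have hτ_apply : ∀ j, τ j = e.symm (π' (e j)) := by
    intro j
    rw [hτ, Equiv.permCongr_apply, Equiv.symm_symm]
  have hMmap : M.map φ = M.submatrix id τ := by
    ext i j
    rw [Matrix.map_apply, Matrix.submatrix_apply, hMentry, hMentry, id_eq, hτ_apply,
      Equiv.apply_symm_apply, hπ'_apply]
    rfl
  -- τ has odd order dividing nn, hence sign 1
  have hπpow : ∀ (k : ℕ) (σ : Fqn →ₐ[Fq] E) (x : Fqn), ((π' ^ k) σ) x = φ^[k] (σ x) := by
    intro k
    induction k with
    | zero => intro σ x; simp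
    | succ k ihk =>
      intro σ x
      rw [pow_succ', Equiv.Perm.mul_apply]
      have h' : (π' ((π' ^ k) σ)) x = φ (((π' ^ k) σ) x) := rfl
      rw [h', ihk σ x, ← Function.iterate_succ_apply' φ]
  have hφit : ∀ (k : ℕ) (x : E), φ^[k] x = x ^ q ^ k := by
    intro k
    induction k with
    | zero => intro x; simp
    | succ k ihk =>
      intro x
      rw [Function.iterate_succ_apply, ihk, hφ_apply, ← pow_mul, pow_succ']
  have hπ'nn : π' ^ nn = 1 := by
    apply Equiv.ext
    intro σ
    apply AlgHom.ext
    intro x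
    rw [hπpow, hφit, ← map_pow, ← hcardn, FiniteField.pow_card]
    rfl
  have hτpow : ∀ (k : ℕ) (j : Fin nn), (τ ^ k) j = e.symm ((π' ^ k) (e j)) := by
    intro k
    induction k with
    | zero => intro j; simp
    | succ k ihk =>
      intro j
      rw [pow_succ', Equiv.Perm.mul_apply, ihk j, hτ_apply, Equiv.apply_symm_apply,
        ← Equiv.Perm.mul_apply, ← pow_succ']
  have hτnn : τ ^ nn = 1 := by
    apply Equiv.ext
    intro j
    rw [hτpow, hπ'nn]
    simp
  have hsign : Equiv.Perm.sign τ = 1 := by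
    have h1 : (Equiv.Perm.sign τ) ^ nn = 1 := by
      rw [← map_pow, hτnn, map_one]
    rcases Int.units_eq_one_or (Equiv.Perm.sign τ) with h | h
    · exact h
    · rw [h, Odd.neg_one_pow hnnodd] at h1
      exact absurd h1 (by decide)
  have hfix : M.det ^ q = M.det := by
    have h2 : φ M.det = (M.map φ).det := by
      rw [RingHom.map_det]
      rfl
    rw [← hφ_apply, h2, hMmap, Matrix.det_permute' τ M, hsign]
    simp
  obtain ⟨d, hd⟩ := fixed_in_base (F := Fq) (E := E) (x := M.det) (by rw [hcard]; exact hfix)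
  refine ⟨d, ?_⟩
  have : algebraMap Fq E (Algebra.traceMatrix Fq b).det = algebraMap Fq E (d * d) := by
    rw [hdet, map_mul, hd]
  exact (algebraMap Fq E).injective this

end Disc

section DValue

private lemma D_value {p s n q : ℕ} [Fact p.Prime] (hp : Odd p) (hs : 0 < s) (hn : 0 < n)
    (hnodd : Odd n) (hq : q = p ^ s) {Fq Fqn : Type*} [Field Fq] [Field Fqn] [Fintype Fq]
    [Fintype Fqn] [Algebra Fq Fqn] [DecidableEq Fq] (hcard : Fintype.card Fq = q)
    (hcardn : Fintype.card Fqn = q ^ n) :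
    ∑ y : Fqn, (quadraticChar Fq (Algebra.trace Fq Fqn (y * y)) : ℤ)
      = ((q : ℤ) - 1) * (q : ℤ) ^ ((n - 1) / 2)
          * (quadraticChar Fq (-1) : ℤ) ^ ((n - 1) / 2) := by
  classical
  have hp2 : p ≠ 2 := by rcases hp with ⟨k, hk⟩; omega
  have hrc : ringChar Fq = p := ring_char_eq hs hq hcard
  have hF : ringChar Fq ≠ 2 := by rw [hrc]; exact hp2
  have hq3 : 2 ≤ q := by
    have := (Fact.out (p := p.Prime)).two_le
    calc 2 ≤ p := this
      _ = p ^ 1 := (pow_one p).symm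
      _ ≤ p ^ s := Nat.pow_le_pow_right (by omega) hs
      _ = q := hq.symm
  -- finrank = n
  have hfr : Module.finrank Fq Fqn = n := by
    have h1 : Fintype.card Fqn = Fintype.card Fq ^ (Module.finrank Fq Fqn) :=
      Module.card_eq_pow_finrank (K := Fq)
    rw [hcard, hcardn] at h1
    exact (Nat.pow_right_injective hq3 h1).symm
  obtain ⟨m0, hm0⟩ := id hnodd
  have hk1 : n + 1 = 2 * m0 + 2 := by omega
  have hm0' : (n - 1) / 2 = m0 := by omega
  have h2m : 2 * m0 + 1 = n := by omega
  haveI : Invertible (2 : Fq) := invertibleOfNonzero (Ring.two_ne_zero hF)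
  obtain ⟨v0, hv0⟩ := LinearMap.BilinForm.exists_orthogonal_basis
    (LinearMap.BilinForm.isSymm_iff.mp (Algebra.traceForm_isSymm (R := Fq) (S := Fqn)))
  let v : Module.Basis (Fin n) Fq Fqn := v0.reindex (finCongr hfr)
  have hv : ∀ i j : Fin n, i ≠ j → (Algebra.traceForm Fq Fqn) (v i) (v j) = 0 := by
    intro i j hij
    show (Algebra.traceForm Fq Fqn) ((v0.reindex (finCongr hfr)) i)
      ((v0.reindex (finCongr hfr)) j) = 0
    rw [Module.Basis.reindex_apply, Module.Basis.reindex_apply]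
    exact hv0 (fun h => hij ((finCongr hfr).symm.injective h))
  set w : Fin n → Fq := fun i => Algebra.trace Fq Fqn (v i * v i) with hw_def
  have hw : ∀ i, w i ≠ 0 := by
    intro i h0
    have hB : (Algebra.traceForm Fq Fqn) (v i) = 0 := by
      apply Module.Basis.ext v
      intro j
      by_cases hij : i = j
      · subst hij
        rw [LinearMap.zero_apply, Algebra.traceForm_apply]
        simp only [hw_def] at h0
        exact h0
      · rw [LinearMap.zero_apply]
        exact hv i j hij
    exact v.ne_zero i ((traceForm_nondegenerate Fq Fqn).1 (v i)
      (fun y => by rw [hB]; rfl))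
  have key : ∀ x : Fin n → Fq,
      Algebra.trace Fq Fqn ((∑ i, x i • v i) * (∑ j, x j • v j)) = ∑ i, w i * x i ^ 2 := by
    intro x
    have h1 : (∑ i, x i • v i) * (∑ j, x j • v j)
        = ∑ i, ∑ j, (x i * x j) • (v i * v j) := by
      rw [Finset.sum_mul_sum]
      refine Finset.sum_congr rfl fun i _ => Finset.sum_congr rfl fun j _ => ?_
      rw [smul_mul_smul_comm]
    rw [h1, map_sum]
    refine Finset.sum_congr rfl fun i _ => ?_
    rw [map_sum, Finset.sum_eq_single i]
    · rw [map_smul, smul_eq_mul]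
      simp only [hw_def]
      ring
    · intro j _ hji
      rw [map_smul, smul_eq_mul]
      have h0 : Algebra.trace Fq Fqn (v i * v j) = 0 := hv i j (fun h => hji (h.symm))
      rw [h0, mul_zero]
    · intro h
      exact absurd (Finset.mem_univ i) h
  -- change variables
  have hsum1 : ∑ y : Fqn, (quadraticChar Fq (Algebra.trace Fq Fqn (y * y)) : ℤ)
      = ∑ x : Fin n → Fq, (quadraticChar Fq (∑ i, w i * x i ^ 2) : ℤ) := by
    refine (Fintype.sum_equiv (v.equivFun.toEquiv.symm) _ _ fun x => ?_).symm
    have he : (v.equivFun.toEquiv.symm x : Fqn) = ∑ i, x i • v i := by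
      rw [LinearEquiv.coe_toEquiv_symm]
      exact v.equivFun_symm_apply x
    rw [he, key]
  rw [hsum1]
  -- relate to the (n+1)-variable quadric count
  set g : (Fin n → Fq) → Fq := fun x => ∑ i, w i * x i ^ 2 with hg
  set W : Fin (n + 1) → Fq := Fin.cons (-1) w with hW
  have hWne : ∀ i, W i ≠ 0 := by
    intro i
    refine Fin.cases ?_ ?_ i
    · rw [hW, Fin.cons_zero]
      exact neg_ne_zero.mpr one_ne_zero
    · intro j
      rw [hW, Fin.cons_succ]
      exact hw j
  have hP : ((univ.filter fun u : Fin (n + 1) → Fq => ∑ i, W i * u i ^ 2 = 0).card : ℤ)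
      = ∑ x : Fin n → Fq, ((quadraticChar Fq (g x) : ℤ) + 1) := by
    rw [card_filter_cons]
    have h1 : ∀ a : Fq, ((univ.filter fun y : Fin n → Fq =>
          (fun u : Fin (n + 1) → Fq => ∑ i, W i * u i ^ 2 = 0) (Fin.cons a y)).card : ℤ)
        = ((univ.filter fun y : Fin n → Fq => a ^ 2 = g y).card : ℤ) := by
      intro a
      have hiff : ∀ y ∈ (univ : Finset (Fin n → Fq)),
          ((fun u : Fin (n + 1) → Fq => ∑ i, W i * u i ^ 2 = 0) (Fin.cons a y))
            ↔ (a ^ 2 = g y) := by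
        intro y _
        show (∑ i, W i * (Fin.cons a y : Fin (n + 1) → Fq) i ^ 2 = 0) ↔ _
        rw [Fin.sum_univ_succ]
        have h2 : ∀ i : Fin n, W i.succ * (Fin.cons a y : Fin (n + 1) → Fq) i.succ ^ 2
            = w i * y i ^ 2 := by
          intro i
          rw [hW, Fin.cons_succ, Fin.cons_succ]
        rw [Finset.sum_congr rfl fun i _ => h2 i]
        have h4 : W 0 * (Fin.cons a y : Fin (n + 1) → Fq) 0 ^ 2 = -(a ^ 2) := by
          rw [hW, Fin.cons_zero, Fin.cons_zero]
          ring
        rw [h4, hg]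
        constructor
        · intro h; linear_combination -h
        · intro h; linear_combination -h
      rw [Finset.filter_congr hiff]
    rw [Finset.sum_congr rfl fun a _ => h1 a]
    have h3 : ∀ a : Fq, ((univ.filter fun y : Fin n → Fq => a ^ 2 = g y).card : ℤ)
        = ∑ y : Fin n → Fq, if a ^ 2 = g y then (1:ℤ) else 0 := fun a =>
      card_filter_eq_sum _
    rw [Finset.sum_congr rfl fun a _ => h3 a, Finset.sum_comm]
    refine Finset.sum_congr rfl fun x _ => ?_
    rw [← card_sqrt_eq hF (g x), card_filter_eq_sum]
  have hdiag := diag_count hF m0 (n + 1) hk1 W hWne 0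
  have hprodW : (∏ i, W i) = (-1) * ∏ i, w i := by
    rw [hW, Fin.prod_univ_succ, Fin.cons_zero]
    congr 1
  have hdiagmat : Algebra.traceMatrix Fq ⇑v = Matrix.diagonal w := by
    ext i j
    by_cases hij : i = j
    · subst hij
      rw [Matrix.diagonal_apply_eq]
      rfl
    · rw [Matrix.diagonal_apply_ne _ hij]
      exact hv i j hij
  have hsq : IsSquare (∏ i, w i) := by
    have := det_traceMatrix_isSquare (nn := n) hp hs hq hcard hcardn hnodd hfr ⇑v
    rwa [hdiagmat, Matrix.det_diagonal] at this
  have hprodne : (∏ i, w i) ≠ 0 := Finset.prod_ne_zero_iff.mpr fun i _ => hw i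
  have hchiprod : quadraticChar Fq (∏ i, w i) = 1 :=
    (quadraticChar_one_iff_isSquare hprodne).mpr hsq
  have hchiW : (quadraticChar Fq ((-1) ^ (m0 + 1) * ∏ i, W i) : ℤ)
      = (quadraticChar Fq (-1) : ℤ) ^ m0 := by
    have harg : ((-1 : Fq)) ^ (m0 + 1) * ∏ i, W i = (-1) ^ m0 * ∏ i, w i := by
      rw [hprodW]
      ring
    rw [harg, map_mul, map_pow, hchiprod, mul_one]
  have hfinal : ∑ x : Fin n → Fq, (quadraticChar Fq (g x) : ℤ)
      = ((univ.filter fun u : Fin (n + 1) → Fq => ∑ i, W i * u i ^ 2 = 0).card : ℤ)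
        - (Fintype.card Fq : ℤ) ^ n := by
    rw [hP, Finset.sum_add_distrib, Finset.sum_const, Finset.card_univ, nsmul_eq_mul,
      mul_one, Fintype.card_pi]
    simp only [Finset.prod_const, Finset.card_univ, Fintype.card_fin]
    push_cast
    ring
  rw [hfinal, hdiag, if_pos rfl, hchiW, hcard, hm0']
  rw [← h2m]
  ring

end DValue

section Kernel

private lemma trace_zero_count {p s n q : ℕ} [Fact p.Prime] (hs : 0 < s) (hn : 0 < n)
    (hq : q = p ^ s) {Fq Fqn : Type*} [Field Fq] [Field Fqn] [Fintype Fq] [Fintype Fqn]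
    [Algebra Fq Fqn] [DecidableEq Fq] (hcard : Fintype.card Fq = q)
    (hcardn : Fintype.card Fqn = q ^ n) :
    ((univ.filter fun α : Fqn => Algebra.trace Fq Fqn α = 0).card : ℤ) = (q : ℤ) ^ (n - 1) := by
  classical
  have hq3 : 2 ≤ q := by
    have := (Fact.out (p := p.Prime)).two_le
    calc 2 ≤ p := this
      _ = p ^ 1 := (pow_one p).symm
      _ ≤ p ^ s := Nat.pow_le_pow_right (by omega) hs
      _ = q := hq.symm
  have hfr : Module.finrank Fq Fqn = n := by
    have h1 : Fintype.card Fqn = Fintype.card Fq ^ (Module.finrank Fq Fqn) :=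
      Module.card_eq_pow_finrank (K := Fq)
    rw [hcard, hcardn] at h1
    exact (Nat.pow_right_injective hq3 h1).symm
  have hsurj : Function.Surjective (Algebra.trace Fq Fqn) := Algebra.trace_surjective Fq Fqn
  have hrange : LinearMap.range (Algebra.trace Fq Fqn) = ⊤ := LinearMap.range_eq_top.mpr hsurj
  have hrank := LinearMap.finrank_range_add_finrank_ker (Algebra.trace Fq Fqn)
  rw [hrange, finrank_top, Module.finrank_self, hfr] at hrank
  have hker : Module.finrank Fq (LinearMap.ker (Algebra.trace Fq Fqn)) = n - 1 := by omega
  have hcardker : Fintype.card (LinearMap.ker (Algebra.trace Fq Fqn)) = q ^ (n - 1) := by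
    have := Module.card_eq_pow_finrank (K := Fq) (V := LinearMap.ker (Algebra.trace Fq Fqn))
    rw [hcard, hker] at this
    exact this
  have h2 : (univ.filter fun α : Fqn => Algebra.trace Fq Fqn α = 0).card
      = Fintype.card (LinearMap.ker (Algebra.trace Fq Fqn)) := by
    rw [← Fintype.card_subtype]
    exact Fintype.card_congr (Equiv.subtypeEquivRight fun x =>
      (LinearMap.mem_ker (f := Algebra.trace Fq Fqn)).symm)
  rw [h2, hcardker]
  push_cast
  rfl

end Kernel

section Tau

private lemma three_pow_mod4 : ∀ s : ℕ, 3 ^ s % 4 = if s % 2 = 0 then 1 else 3 := by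
  intro s
  induction s with
  | zero => rfl
  | succ k ih =>
    rw [pow_succ, Nat.mul_mod, ih]
    by_cases h : k % 2 = 0
    · rw [if_pos h, if_neg (by omega)]
    · rw [if_neg h, if_pos (by omega)]

private lemma tau_pow {p s n q : ℕ} [Fact p.Prime] (hp : Odd p) (hnodd : Odd n)
    (hq : q = p ^ s) {Fq : Type*} [Field Fq] [Fintype Fq] [DecidableEq Fq]
    (hcard : Fintype.card Fq = q) (hF : ringChar Fq ≠ 2) :
    tauC p ^ (s * (n - 1)) = (((quadraticChar Fq (-1) : ℤ) : ℂ)) ^ ((n - 1) / 2) := by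
  obtain ⟨m, hm⟩ := id hnodd
  have hn1 : n - 1 = 2 * m := by omega
  have hm' : (n - 1) / 2 = m := by omega
  have hχ : quadraticChar Fq (-1) = ZMod.χ₄ (Fintype.card Fq) := quadraticChar_neg_one hF
  have hp14 : p % 4 = 1 ∨ p % 4 = 3 := by
    rcases hp with ⟨k, hk⟩
    omega
  have hpodd : p ^ s % 2 = 1 := Nat.odd_iff.mp (Odd.pow hp)
  rw [hχ, hcard, hq, hm']
  rcases hp14 with h1 | h3
  · have hq4 : p ^ s % 4 = 1 := by
      rw [Nat.pow_mod, h1]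
      simp
    have hval : (ZMod.χ₄ (((p ^ s : ℕ) : ZMod 4)) : ℤ) = 1 := by
      rw [ZMod.χ₄_nat_eq_if_mod_four, if_neg (by omega), if_pos hq4]
    rw [hval, tauC, if_pos h1, one_pow]
    norm_num
  · have hq4 : p ^ s % 4 = (if s % 2 = 0 then 1 else 3) := by
      rw [Nat.pow_mod, h3]
      exact three_pow_mod4 s
    have hval : (ZMod.χ₄ (((p ^ s : ℕ) : ZMod 4)) : ℤ) = (-1) ^ s := by
      rw [ZMod.χ₄_nat_eq_if_mod_four, if_neg (by omega)]
      by_cases hse : s % 2 = 0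
      · rw [if_pos (by rw [hq4, if_pos hse]), (Even.neg_one_pow (Nat.even_iff.mpr hse))]
      · rw [if_neg (by rw [hq4, if_neg hse]; omega),
          (Odd.neg_one_pow (Nat.odd_iff.mpr (by omega)))]
    rw [hval, tauC, if_neg (by omega), hn1]
    have h2 : Complex.I ^ (s * (2 * m)) = ((-1 : ℂ)) ^ (s * m) := by
      have h3' : s * (2 * m) = 2 * (s * m) := by ring
      rw [h3', pow_mul, Complex.I_sq]
    rw [h2]
    push_cast
    rw [← pow_mul]

end Tau

theorem count_double_quadratic_residues (p s n : ℕ) [Fact p.Prime] (hp : Odd p) (hs : 0 < s)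
    (hn : 0 < n) (hnodd : Odd n) (q : ℕ) (hq : q = p ^ s)
    (Fq Fqn : Type) [Field Fq] [Field Fqn] [Fintype Fq] [Fintype Fqn] [Algebra Fq Fqn]
    (hcard : Fintype.card Fq = q) (hcardn : Fintype.card Fqn = q ^ n) :
    (Nat.card {α : Fqn // (∃ y : Fqn, y ^ 2 = α) ∧
        ∃ y : Fqn, y ^ 2 = algebraMap Fq Fqn (Algebra.trace Fq Fqn α)} : ℂ)
      = ((q : ℂ) ^ n + (q : ℂ) ^ (n - 1)
          + tauC p ^ (s * (n - 1)) * ((q : ℂ) - 1) * (q : ℂ) ^ ((n - 1) / 2) + 2) / 4 := by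
  classical
  have hp2 : p ≠ 2 := by rcases hp with ⟨k, hk⟩; omega
  have hrc : ringChar Fq = p := ring_char_eq hs hq hcard
  have hrcn : ringChar Fqn = p := ring_char_eq (Nat.mul_pos hs hn) (by rw [hq, ← pow_mul]) hcardn
  have hF : ringChar Fq ≠ 2 := by rw [hrc]; exact hp2
  have hFn : ringChar Fqn ≠ 2 := by rw [hrcn]; exact hp2
  have hNcard : Nat.card {α : Fqn // (∃ y : Fqn, y ^ 2 = α) ∧
        ∃ y : Fqn, y ^ 2 = algebraMap Fq Fqn (Algebra.trace Fq Fqn α)}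
      = (univ.filter fun α : Fqn => (∃ y : Fqn, y ^ 2 = α) ∧
        ∃ y : Fqn, y ^ 2 = algebraMap Fq Fqn (Algebra.trace Fq Fqn α)).card := by
    rw [Nat.card_eq_fintype_card, Fintype.card_subtype]
  -- a nonsquare c of Fq
  obtain ⟨c, hc⟩ := FiniteField.exists_nonsquare (F := Fq) hF
  have hc0 : c ≠ 0 := fun h => hc (by rw [h]; exact ⟨0, by ring⟩)
  have hχc : quadraticChar Fq c = -1 := quadraticChar_neg_one_iff_not_isSquare.mpr hc
  have hcn : ¬ IsSquare (algebraMap Fq Fqn c) := by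
    rintro ⟨r, hr⟩
    exact hc ((square_bridge hp hs hn hnodd hq hcard hcardn c).mp ⟨r, by rw [hr]; ring⟩)
  have hχcn : quadraticChar Fqn (algebraMap Fq Fqn c) = -1 :=
    quadraticChar_neg_one_iff_not_isSquare.mpr hcn
  have hcn0 : algebraMap Fq Fqn c ≠ 0 := fun h =>
    hc0 ((map_eq_zero_iff _ (algebraMap Fq Fqn).injective).mp h)
  have hbij : Function.Bijective (fun α : Fqn => (algebraMap Fq Fqn c) * α) :=
    (Equiv.mulLeft₀ (algebraMap Fq Fqn c) hcn0).bijective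
  have htr : ∀ α : Fqn, Algebra.trace Fq Fqn ((algebraMap Fq Fqn c) * α)
      = c * Algebra.trace Fq Fqn α := by
    intro α
    rw [← Algebra.smul_def, map_smul, smul_eq_mul]
  -- T2 : sum of χq ∘ trace vanishes
  have hT2 : ∑ α : Fqn, (quadraticChar Fq (Algebra.trace Fq Fqn α) : ℤ) = 0 := by
    have h1 : ∑ α : Fqn, (quadraticChar Fq (Algebra.trace Fq Fqn ((algebraMap Fq Fqn c) * α)) : ℤ)
        = ∑ α : Fqn, (quadraticChar Fq (Algebra.trace Fq Fqn α) : ℤ) :=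
      Fintype.sum_bijective _ hbij _ _ (fun x => rfl)
    have h2 : ∀ α : Fqn, (quadraticChar Fq (Algebra.trace Fq Fqn ((algebraMap Fq Fqn c) * α)) : ℤ)
        = - (quadraticChar Fq (Algebra.trace Fq Fqn α) : ℤ) := by
      intro α
      rw [htr, map_mul, hχc]
      ring
    rw [Finset.sum_congr rfl fun α _ => h2 α, Finset.sum_neg_distrib] at h1
    linarith
  -- T6 : sum of χn * (indicator of trace zero) vanishes
  have hT6 : ∑ α : Fqn, (quadraticChar Fqn α : ℤ)
        * (if Algebra.trace Fq Fqn α = 0 then (1:ℤ) else 0) = 0 := by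
    have h1 : ∑ α : Fqn, ((quadraticChar Fqn ((algebraMap Fq Fqn c) * α) : ℤ)
          * (if Algebra.trace Fq Fqn ((algebraMap Fq Fqn c) * α) = 0 then (1:ℤ) else 0))
        = ∑ α : Fqn, ((quadraticChar Fqn α : ℤ)
          * (if Algebra.trace Fq Fqn α = 0 then (1:ℤ) else 0)) :=
      Fintype.sum_bijective _ hbij _ _ (fun x => rfl)
    have h2 : ∀ α : Fqn, (quadraticChar Fqn ((algebraMap Fq Fqn c) * α) : ℤ)
          * (if Algebra.trace Fq Fqn ((algebraMap Fq Fqn c) * α) = 0 then (1:ℤ) else 0)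
        = - ((quadraticChar Fqn α : ℤ)
          * (if Algebra.trace Fq Fqn α = 0 then (1:ℤ) else 0)) := by
      intro α
      have hiff : (Algebra.trace Fq Fqn ((algebraMap Fq Fqn c) * α) = 0)
          ↔ (Algebra.trace Fq Fqn α = 0) := by
        rw [htr]
        constructor
        · intro h
          rcases mul_eq_zero.1 h with h' | h'
          · exact absurd h' hc0
          · exact h'
        · intro h
          rw [h, mul_zero]
      rw [map_mul, hχcn, if_congr hiff rfl rfl]
      ring
    rw [Finset.sum_congr rfl fun α _ => h2 α, Finset.sum_neg_distrib] at h1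
    linarith
  -- T5 : the character sum D
  have hT5 : ∑ α : Fqn, (quadraticChar Fqn α : ℤ) * (quadraticChar Fq (Algebra.trace Fq Fqn α) : ℤ)
      = ((q : ℤ) - 1) * (q : ℤ) ^ ((n - 1) / 2)
          * (quadraticChar Fq (-1) : ℤ) ^ ((n - 1) / 2) := by
    have hD := D_value hp hs hn hnodd hq hcard hcardn
    have h1 : ∑ y : Fqn, (quadraticChar Fq (Algebra.trace Fq Fqn (y * y)) : ℤ)
        = ∑ t : Fqn, ((univ.filter fun y : Fqn => y * y = t).card : ℤ)
            * (quadraticChar Fq (Algebra.trace Fq Fqn t) : ℤ) :=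
      sum_fiber (fun y : Fqn => y * y) (fun t => (quadraticChar Fq (Algebra.trace Fq Fqn t) : ℤ))
    have h2 : ∀ t : Fqn, ((univ.filter fun y : Fqn => y * y = t).card : ℤ)
        = (quadraticChar Fqn t : ℤ) + 1 := by
      intro t
      rw [← card_sqrt_eq hFn t]
      congr 2
      ext y
      simp only [mem_filter, mem_univ, true_and, sq]
    have h4 : ∑ y : Fqn, (quadraticChar Fq (Algebra.trace Fq Fqn (y * y)) : ℤ)
        = ∑ t : Fqn, ((quadraticChar Fqn t : ℤ) + 1)
            * (quadraticChar Fq (Algebra.trace Fq Fqn t) : ℤ) := by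
      rw [h1]
      exact Finset.sum_congr rfl fun t _ => by rw [h2]
    have h3 : ∑ t : Fqn, ((quadraticChar Fqn t : ℤ) + 1)
          * (quadraticChar Fq (Algebra.trace Fq Fqn t) : ℤ)
        = (∑ t : Fqn, (quadraticChar Fqn t : ℤ) * (quadraticChar Fq (Algebra.trace Fq Fqn t) : ℤ))
          + ∑ t : Fqn, (quadraticChar Fq (Algebra.trace Fq Fqn t) : ℤ) := by
      rw [← Finset.sum_add_distrib]
      exact Finset.sum_congr rfl fun t _ => by ring
    have h5 := h4.symm.trans hD
    rw [h3, hT2, add_zero] at h5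
    exact h5
  -- T3 : number of trace-zero elements
  have hT3 : ∑ α : Fqn, (if Algebra.trace Fq Fqn α = 0 then (1:ℤ) else 0)
      = (q : ℤ) ^ (n - 1) := by
    rw [← card_filter_eq_sum]
    exact trace_zero_count hs hn hq hcard hcardn
  -- T4 : sum of χn vanishes
  have hT4 : ∑ α : Fqn, (quadraticChar Fqn α : ℤ) = 0 := quadraticChar_sum_zero hFn
  -- T7
  have hT7 : ∑ α : Fqn, (if α = 0 then (1:ℤ) else 0) = 1 := by
    rw [Finset.sum_ite_eq' univ (0 : Fqn) (fun _ => (1:ℤ)), if_pos (mem_univ _)]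
  -- T8
  have hT8 : ∑ α : Fqn, (if α = 0 then (1:ℤ) else 0)
        * (quadraticChar Fq (Algebra.trace Fq Fqn α) : ℤ) = 0 := by
    have h1 : ∀ α : Fqn, (if α = 0 then (1:ℤ) else 0)
          * (quadraticChar Fq (Algebra.trace Fq Fqn α) : ℤ)
        = if α = 0 then (quadraticChar Fq (Algebra.trace Fq Fqn α) : ℤ) else 0 := by
      intro α
      by_cases h : α = 0 <;> simp [h]
    rw [Finset.sum_congr rfl fun α _ => h1 α,
      Finset.sum_ite_eq' univ (0 : Fqn) (fun α => (quadraticChar Fq (Algebra.trace Fq Fqn α) : ℤ)),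
      if_pos (mem_univ _), map_zero, MulChar.map_zero]
  -- T9
  have hT9 : ∑ α : Fqn, (if α = 0 then (1:ℤ) else 0)
        * (if Algebra.trace Fq Fqn α = 0 then (1:ℤ) else 0) = 1 := by
    have h1 : ∀ α : Fqn, (if α = 0 then (1:ℤ) else 0)
          * (if Algebra.trace Fq Fqn α = 0 then (1:ℤ) else 0)
        = if α = 0 then (if Algebra.trace Fq Fqn α = 0 then (1:ℤ) else 0) else 0 := by
      intro α
      by_cases h : α = 0 <;> simp [h]
    rw [Finset.sum_congr rfl fun α _ => h1 α,
      Finset.sum_ite_eq' univ (0 : Fqn)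
        (fun α => (if Algebra.trace Fq Fqn α = 0 then (1:ℤ) else 0)),
      if_pos (mem_univ _), if_pos (by rw [map_zero])]
  -- T1
  have hT1 : ∑ _α : Fqn, (1 : ℤ) = (q : ℤ) ^ n := by
    rw [Finset.sum_const, Finset.card_univ, hcardn, nsmul_eq_mul, mul_one]
    push_cast
    rfl
  -- pointwise identity
  have hpoint : ∀ α : Fqn, 4 * (if ((∃ y : Fqn, y ^ 2 = α) ∧
        ∃ y : Fqn, y ^ 2 = algebraMap Fq Fqn (Algebra.trace Fq Fqn α)) then (1:ℤ) else 0)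
      = (1 + (quadraticChar Fqn α : ℤ) + (if α = 0 then (1:ℤ) else 0))
        * (1 + (quadraticChar Fq (Algebra.trace Fq Fqn α) : ℤ)
            + (if Algebra.trace Fq Fqn α = 0 then (1:ℤ) else 0)) := by
    intro α
    have h1 : (1 + (quadraticChar Fqn α : ℤ) + (if α = 0 then (1:ℤ) else 0))
        = 2 * (if (∃ y : Fqn, y ^ 2 = α) then 1 else 0) := by
      by_cases h0 : α = 0
      · rw [if_pos h0, h0, MulChar.map_zero, if_pos ⟨0, by ring⟩]
        norm_num
      · rw [if_neg h0]
        by_cases hsq : IsSquare α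
        · obtain ⟨r, hr⟩ := hsq
          rw [(quadraticChar_one_iff_isSquare h0).mpr ⟨r, hr⟩, if_pos ⟨r, by rw [hr]; ring⟩]
          norm_num
        · rw [quadraticChar_neg_one_iff_not_isSquare.mpr hsq,
            if_neg (fun ⟨y, hy⟩ => hsq ⟨y, by rw [← hy]; ring⟩)]
          norm_num
    have h2 : (1 + (quadraticChar Fq (Algebra.trace Fq Fqn α) : ℤ)
          + (if Algebra.trace Fq Fqn α = 0 then (1:ℤ) else 0))
        = 2 * (if (∃ y : Fqn, y ^ 2 = algebraMap Fq Fqn (Algebra.trace Fq Fqn α))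
            then 1 else 0) := by
      have hbr := square_bridge hp hs hn hnodd hq hcard hcardn (Algebra.trace Fq Fqn α)
      rw [if_congr hbr rfl rfl]
      by_cases h0 : Algebra.trace Fq Fqn α = 0
      · rw [if_pos h0, h0, MulChar.map_zero, if_pos ⟨0, by ring⟩]
        norm_num
      · rw [if_neg h0]
        by_cases hsq : IsSquare (Algebra.trace Fq Fqn α)
        · rw [(quadraticChar_one_iff_isSquare h0).mpr hsq, if_pos hsq]
          norm_num
        · rw [quadraticChar_neg_one_iff_not_isSquare.mpr hsq, if_neg hsq]
          norm_num
    rw [h1, h2]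
    by_cases hA : (∃ y : Fqn, y ^ 2 = α) <;>
      by_cases hB : (∃ y : Fqn, y ^ 2 = algebraMap Fq Fqn (Algebra.trace Fq Fqn α)) <;>
      simp [hA, hB]
  -- the main integer identity
  have main : 4 * (((univ.filter fun α : Fqn => (∃ y : Fqn, y ^ 2 = α) ∧
        ∃ y : Fqn, y ^ 2 = algebraMap Fq Fqn (Algebra.trace Fq Fqn α)).card : ℤ))
      = (q : ℤ) ^ n + (q : ℤ) ^ (n - 1)
        + ((q : ℤ) - 1) * (q : ℤ) ^ ((n - 1) / 2)
            * (quadraticChar Fq (-1) : ℤ) ^ ((n - 1) / 2) + 2 := by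
    rw [card_filter_eq_sum, Finset.mul_sum,
      Finset.sum_congr rfl fun α _ => hpoint α]
    have hexp : ∀ α : Fqn, (1 + (quadraticChar Fqn α : ℤ) + (if α = 0 then (1:ℤ) else 0))
        * (1 + (quadraticChar Fq (Algebra.trace Fq Fqn α) : ℤ)
            + (if Algebra.trace Fq Fqn α = 0 then (1:ℤ) else 0))
      = 1 + (quadraticChar Fq (Algebra.trace Fq Fqn α) : ℤ)
        + (if Algebra.trace Fq Fqn α = 0 then (1:ℤ) else 0)
        + (quadraticChar Fqn α : ℤ)
        + (quadraticChar Fqn α : ℤ) * (quadraticChar Fq (Algebra.trace Fq Fqn α) : ℤ)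
        + (quadraticChar Fqn α : ℤ) * (if Algebra.trace Fq Fqn α = 0 then (1:ℤ) else 0)
        + (if α = 0 then (1:ℤ) else 0)
        + (if α = 0 then (1:ℤ) else 0) * (quadraticChar Fq (Algebra.trace Fq Fqn α) : ℤ)
        + (if α = 0 then (1:ℤ) else 0)
            * (if Algebra.trace Fq Fqn α = 0 then (1:ℤ) else 0) := fun α => by ring
    rw [Finset.sum_congr rfl fun α _ => hexp α]
    rw [Finset.sum_add_distrib, Finset.sum_add_distrib, Finset.sum_add_distrib,
      Finset.sum_add_distrib, Finset.sum_add_distrib, Finset.sum_add_distrib,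
      Finset.sum_add_distrib, Finset.sum_add_distrib]
    rw [hT2, hT3, hT4, hT5, hT6, hT7, hT8, hT9, hT1]
    ring
  -- pass to ℂ
  have hτ : tauC p ^ (s * (n - 1))
      = (((quadraticChar Fq (-1) : ℤ) : ℂ)) ^ ((n - 1) / 2) :=
    tau_pow hp hnodd hq hcard hF
  have mainC := congrArg (fun z : ℤ => (z : ℂ)) main
  push_cast at mainC
  rw [hNcard, eq_div_iff (by norm_num : (4:ℂ) ≠ 0), hτ]
  push_cast
  linear_combination mainC
end
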